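/- arXiv:2302.13220 — 10 statements merged into one kernel-verified Lean document; each statement's English description precedes it below -/
import Mathlib

section
/- Let n ≥ 1, let Λ be a real n×n matrix such that I − Λ is invertible, let Φ be a symmetric positive definite real n×n matrix, let i be a fixed index, and let α be a nonzero real number. Define Λ' by Λ'[p,i] = α⁻¹·Λ[p,i] for p ≠ i, Λ'[i,c] = α·Λ[i,c] for c ≠ i, Λ'[i,i] = Λ[i,i], and Λ'[j,k] = Λ[j,k] for all j,k ≠ i; define Φ' by Φ'[i,s] = Φ'[s,i] = α⁻¹·Φ[i,s] for s ≠ i, Φ'[i,i] = α⁻²·Φ[i,i], and Φ'[j,k] = Φ[j,k] for all j,k ≠ i. Then I − Λ' is invertible, and the implied covariance matrices Σ = (I − Λ)⁻ᵀ Φ (I − Λ)⁻¹ and Σ' = (I − Λ')⁻ᵀ Φ' (I − Λ')⁻¹ satisfy Σ'[j,k] = Σ[j,k] for all j, k ≠ i. -/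
open Matrix

/-- Lemma 1 of the paper, rescaling of latent variables.
Rescaling variable `i` of an SEM `(Λ, Φ)` by a nonzero factor `α` (coefficients
into `i` scaled by `α⁻¹`, coefficients out of `i` by `α`, error covariances of
`i` by `α⁻¹`, error variance of `i` by `α⁻²`) keeps `1 - Λ'` invertible and
leaves the implied covariances among the other variables unchanged. -/
theorem rescaling_latent_variable {n : ℕ} (hn : 1 ≤ n)
    (Λ Φ : Matrix (Fin n) (Fin n) ℝ)
    (hinv : IsUnit (1 - Λ).det) (hΦ : Φ.PosDef)
    (i : Fin n) (α : ℝ) (hα : α ≠ 0)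
    (Λ' Φ' : Matrix (Fin n) (Fin n) ℝ)
    (hΛ'in : ∀ p, p ≠ i → Λ' p i = α⁻¹ * Λ p i)
    (hΛ'out : ∀ c, c ≠ i → Λ' i c = α * Λ i c)
    (hΛ'ii : Λ' i i = Λ i i)
    (hΛ'rest : ∀ j k, j ≠ i → k ≠ i → Λ' j k = Λ j k)
    (hΦ'i : ∀ s, s ≠ i → Φ' i s = α⁻¹ * Φ i s ∧ Φ' s i = α⁻¹ * Φ i s)
    (hΦ'ii : Φ' i i = (α ^ 2)⁻¹ * Φ i i)
    (hΦ'rest : ∀ j k, j ≠ i → k ≠ i → Φ' j k = Φ j k) :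
    IsUnit (1 - Λ').det ∧
    ∀ j k, j ≠ i → k ≠ i →
      ((((1 - Λ')⁻¹)ᵀ * Φ' * (1 - Λ')⁻¹ : Matrix (Fin n) (Fin n) ℝ)) j k =
        ((((1 - Λ)⁻¹)ᵀ * Φ * (1 - Λ)⁻¹ : Matrix (Fin n) (Fin n) ℝ)) j k := by
  have hsym : ∀ a b, Φ a b = Φ b a := by
    intro a b
    conv_lhs => rw [← hΦ.1]
    simp [Matrix.conjTranspose_apply]
  set d : Fin n → ℝ := fun j => if j = i then α else 1 with hd
  set e : Fin n → ℝ := fun j => if j = i then α⁻¹ else 1 with he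
  set D : Matrix (Fin n) (Fin n) ℝ := Matrix.diagonal d with hD
  set E : Matrix (Fin n) (Fin n) ℝ := Matrix.diagonal e with hE
  have hde : ∀ j, d j * e j = 1 := by
    intro j; by_cases h : j = i <;> simp [hd, he, h, mul_inv_cancel₀ hα]
  have hDE : D * E = 1 := by
    rw [hD, hE, Matrix.diagonal_mul_diagonal,
      show (fun j => d j * e j) = fun _ => (1 : ℝ) from funext hde,
      Matrix.diagonal_one]
  have hED : E * D = 1 := by
    rw [hD, hE, Matrix.diagonal_mul_diagonal,
      show (fun j => e j * d j) = fun _ => (1 : ℝ) from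
        funext (fun j => by rw [mul_comm]; exact hde j),
      Matrix.diagonal_one]
  have hentryD : ∀ (M : Matrix (Fin n) (Fin n) ℝ) j k,
      (D * M * E) j k = d j * M j k * e k := by
    intro M j k
    rw [hD, hE, Matrix.mul_diagonal, Matrix.diagonal_mul]
  have hentryE : ∀ (M : Matrix (Fin n) (Fin n) ℝ) j k,
      (E * M * E) j k = e j * M j k * e k := by
    intro M j k
    rw [hE, Matrix.mul_diagonal, Matrix.diagonal_mul]
  have hΛ'eq : 1 - Λ' = D * (1 - Λ) * E := by
    ext j k
    rw [hentryD]
    by_cases hj : j = i <;> by_cases hk : k = i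
    · rw [hj, hk]
      simp only [hd, he, Matrix.sub_apply, Matrix.one_apply, if_pos rfl, hΛ'ii]
      field_simp
    · have hik : i ≠ k := fun h => hk h.symm
      rw [hj]
      simp only [hd, he, Matrix.sub_apply, Matrix.one_apply, if_pos rfl,
        if_neg hk, if_neg hik, hΛ'out k hk]
      ring
    · have hji : j ≠ i := hj
      rw [hk]
      simp only [hd, he, Matrix.sub_apply, Matrix.one_apply, if_pos rfl,
        if_neg hj, hΛ'in j hj]
      ring
    · simp only [hd, he, Matrix.sub_apply, if_neg hj, if_neg hk,
        hΛ'rest j k hj hk, one_mul, mul_one]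
  have hΦ'eq : Φ' = E * Φ * E := by
    ext j k
    rw [hentryE]
    by_cases hj : j = i <;> by_cases hk : k = i
    · rw [hj, hk]
      simp only [he, if_pos rfl, hΦ'ii]
      rw [sq]; ring
    · rw [hj]
      simp only [he, if_pos rfl, if_neg hk, (hΦ'i k hk).1, mul_one]
    · rw [hk]
      simp only [he, if_pos rfl, if_neg hj, (hΦ'i j hj).2, hsym j i, one_mul]
      ring
    · simp only [he, if_neg hj, if_neg hk, hΦ'rest j k hj hk, one_mul, mul_one]
  have hdetDE : D.det * E.det = 1 := by
    rw [← Matrix.det_mul, hDE, Matrix.det_one]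
  have hinv' : IsUnit (1 - Λ').det := by
    rw [hΛ'eq, Matrix.det_mul, Matrix.det_mul]
    exact ((IsUnit.of_mul_eq_one _ hdetDE).mul hinv).mul
      (IsUnit.of_mul_eq_one _ (by rw [mul_comm] at hdetDE; exact hdetDE))
  refine ⟨hinv', ?_⟩
  have hDinv : D⁻¹ = E := Matrix.inv_eq_left_inv hED
  have hEinv : E⁻¹ = D := Matrix.inv_eq_left_inv hDE
  have hinvΛ' : (1 - Λ')⁻¹ = D * (1 - Λ)⁻¹ * E := by
    rw [hΛ'eq, Matrix.mul_inv_rev, Matrix.mul_inv_rev, hDinv, hEinv,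
      Matrix.mul_assoc]
  have hDEm : ∀ X : Matrix (Fin n) (Fin n) ℝ, D * (E * X) = X := by
    intro X; rw [← Matrix.mul_assoc, hDE, one_mul]
  have hEDm : ∀ X : Matrix (Fin n) (Fin n) ℝ, E * (D * X) = X := by
    intro X; rw [← Matrix.mul_assoc, hED, one_mul]
  have key : (((1 - Λ')⁻¹)ᵀ * Φ' * (1 - Λ')⁻¹ : Matrix (Fin n) (Fin n) ℝ) =
      E * ((((1 - Λ)⁻¹)ᵀ * Φ * (1 - Λ)⁻¹) : Matrix (Fin n) (Fin n) ℝ) * E := by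
    rw [hinvΛ', hΦ'eq, Matrix.transpose_mul, Matrix.transpose_mul]
    have hDt : Dᵀ = D := by rw [hD, Matrix.diagonal_transpose]
    have hEt : Eᵀ = E := by rw [hE, Matrix.diagonal_transpose]
    rw [hDt, hEt]
    simp only [Matrix.mul_assoc]
    rw [hDEm, hEDm]
  intro j k hj hk
  rw [key, hentryE]
  simp [he, hj, hk]
end

section
/- Let π_1, …, π_k (k ≥ 1) be treks in a mixed graph G. Then every t-separator (L, R) of the set {π_1, …, π_k} has size at least k if and only if no two treks π_a, π_b with a ≠ b have a same-sided intersection. -/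
open Classical

/-- A mixed graph: directed arrows `dir` and bidirected arrows `bi`
(symmetric and irreflexive). -/
structure MixedGraph (V : Type) where
  dir : V → V → Prop
  bi : V → V → Prop
  bi_symm : ∀ u v, bi u v → bi v u
  bi_irrefl : ∀ v, ¬ bi v v

variable {V : Type}

/-- An ADMG is a mixed graph with no directed cycle. -/
def MixedGraph.Acyclic (G : MixedGraph V) : Prop :=
  ∀ v, ¬ Relation.TransGen G.dir v v

/-- A trek: a pair of directed paths (given as nonempty lists of vertices,
each starting at a "top") whose tops either coincide (case (i)) or are
joined by a bidirected arrow (case (ii)).  The left path ends at the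
trek's source and the right path ends at its destination. -/
structure Trek (G : MixedGraph V) where
  left : List V
  right : List V
  left_ne : left ≠ []
  right_ne : right ≠ []
  left_chain : left.Chain' G.dir
  right_chain : right.Chain' G.dir
  top_ok : left.head left_ne = right.head right_ne ∨
    G.bi (left.head left_ne) (right.head right_ne)

namespace Trek

variable {G : MixedGraph V}

/-- The left endpoint of a trek. -/
def src (t : Trek G) : V := t.left.getLast t.left_ne

/-- The right endpoint of a trek. -/
def dst (t : Trek G) : V := t.right.getLast t.right_ne

/-- `v` lies on the left side of the trek. -/
def onLeft (t : Trek G) (v : V) : Prop := v ∈ t.left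

/-- `v` lies on the right side of the trek. -/
def onRight (t : Trek G) (v : V) : Prop := v ∈ t.right

/-- The number of arrows of a trek (counting the bidirected arrow if the
tops differ). -/
noncomputable def length (t : Trek G) : ℕ :=
  (t.left.length - 1) + (t.right.length - 1) +
    (if t.left.head t.left_ne = t.right.head t.right_ne then 0 else 1)

/-- Two treks have a same-sided intersection if some vertex lies on both
their left sides or on both their right sides. -/
def SameSided (t₁ t₂ : Trek G) : Prop :=
  ∃ v, (t₁.onLeft v ∧ t₂.onLeft v) ∨ (t₁.onRight v ∧ t₂.onRight v)

end Trek

/-- `(L, R)` t-separates the vertex sets `A` and `B`. -/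
def TSep (G : MixedGraph V) (L R : Finset V) (A B : Set V) : Prop :=
  ∀ t : Trek G, t.src ∈ A → t.dst ∈ B →
    (∃ v ∈ L, t.onLeft v) ∨ (∃ v ∈ R, t.onRight v)

/-- The graph obtained by deleting all arrows from a vertex of `X` to `y`. -/
def MixedGraph.removeOut (G : MixedGraph V) (X : Set V) (y : V) : MixedGraph V where
  dir u v := G.dir u v ∧ ¬ (u ∈ X ∧ v = y)
  bi := G.bi
  bi_symm := G.bi_symm
  bi_irrefl := G.bi_irrefl

/-- every t-separator of the family of treks `π 1, …, π k` has
size at least `k` iff no two of the treks have a same-sided intersection. -/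
theorem every_separator_large_iff_no_same_sided_intersection
    {V : Type} (G : MixedGraph V) (k : ℕ) (hk : 1 ≤ k) (π : Fin k → Trek G) :
    (∀ L R : Finset V,
        (∀ a : Fin k, (∃ v ∈ L, (π a).onLeft v) ∨ (∃ v ∈ R, (π a).onRight v)) →
        k ≤ L.card + R.card)
    ↔ ∀ a b : Fin k, a ≠ b → ¬ Trek.SameSided (π a) (π b) := by
  classical
  constructor
  · intro hsep a b hab hss
    obtain ⟨v, hv⟩ := hss
    have hk2 : 1 < k := by
      have := Fintype.one_lt_card_iff.mpr ⟨a, b, hab⟩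
      simpa using this
    set S : Finset (Fin k) := Finset.univ \ {a, b} with hS
    have hScard : S.card = k - 2 := by
      rw [hS, Finset.card_sdiff_of_subset (Finset.subset_univ _), Finset.card_univ,
        Fintype.card_fin, Finset.card_insert_of_notMem (by simpa using hab),
        Finset.card_singleton]
    rcases hv with ⟨hva, hvb⟩ | ⟨hva, hvb⟩
    · set L : Finset V := insert v (S.image fun c => (π c).src) with hL
      have hcov : ∀ c : Fin k,
          (∃ w ∈ L, (π c).onLeft w) ∨ (∃ w ∈ (∅ : Finset V), (π c).onRight w) := by
        intro c
        by_cases hca : c = a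
        · exact Or.inl ⟨v, Finset.mem_insert_self _ _, hca ▸ hva⟩
        by_cases hcb : c = b
        · exact Or.inl ⟨v, Finset.mem_insert_self _ _, hcb ▸ hvb⟩
        refine Or.inl ⟨(π c).src, ?_, ?_⟩
        · exact Finset.mem_insert_of_mem (Finset.mem_image_of_mem _ (by
            simp [hS, hca, hcb]))
        · exact List.getLast_mem _
      have := hsep L ∅ hcov
      have hLcard : L.card ≤ 1 + S.card :=
        le_trans (Finset.card_insert_le _ _) (by
          have := Finset.card_image_le (s := S) (f := fun c => (π c).src)
          omega)
      simp only [Finset.card_empty] at this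
      omega
    · set R : Finset V := insert v (S.image fun c => (π c).dst) with hR
      have hcov : ∀ c : Fin k,
          (∃ w ∈ (∅ : Finset V), (π c).onLeft w) ∨ (∃ w ∈ R, (π c).onRight w) := by
        intro c
        by_cases hca : c = a
        · exact Or.inr ⟨v, Finset.mem_insert_self _ _, hca ▸ hva⟩
        by_cases hcb : c = b
        · exact Or.inr ⟨v, Finset.mem_insert_self _ _, hcb ▸ hvb⟩
        refine Or.inr ⟨(π c).dst, ?_, ?_⟩
        · exact Finset.mem_insert_of_mem (Finset.mem_image_of_mem _ (by
            simp [hS, hca, hcb]))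
        · exact List.getLast_mem _
      have := hsep ∅ R hcov
      have hRcard : R.card ≤ 1 + S.card :=
        le_trans (Finset.card_insert_le _ _) (by
          have := Finset.card_image_le (s := S) (f := fun c => (π c).dst)
          omega)
      simp only [Finset.card_empty] at this
      omega
  · intro hno L R hcov
    have hex : ∀ a : Fin k, ∃ x : V ⊕ V,
        (∃ v, x = Sum.inl v ∧ v ∈ L ∧ (π a).onLeft v) ∨
        (∃ v, x = Sum.inr v ∧ v ∈ R ∧ (π a).onRight v) := by
      intro a
      rcases hcov a with ⟨v, hvL, hv⟩ | ⟨v, hvR, hv⟩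
      exacts [⟨Sum.inl v, Or.inl ⟨v, rfl, hvL, hv⟩⟩,
        ⟨Sum.inr v, Or.inr ⟨v, rfl, hvR, hv⟩⟩]
    choose g hg using hex
    have hinj : Function.Injective g := by
      intro a b hab
      by_contra hne
      rcases hg a with ⟨va, hxa, hvaL, hva⟩ | ⟨va, hxa, hvaR, hva⟩ <;>
        rcases hg b with ⟨vb, hxb, hvbL, hvb⟩ | ⟨vb, hxb, hvbR, hvb⟩ <;>
        rw [hxa, hxb] at hab
      · injection hab with h; subst h
        exact hno a b hne ⟨va, Or.inl ⟨hva, hvb⟩⟩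
      · exact Sum.inl_ne_inr hab
      · exact Sum.inr_ne_inl hab
      · injection hab with h; subst h
        exact hno a b hne ⟨va, Or.inr ⟨hva, hvb⟩⟩
    calc k = (Finset.univ : Finset (Fin k)).card := by simp
      _ = (Finset.univ.image g).card :=
          (Finset.card_image_of_injective _ hinj).symm
      _ ≤ (L.disjSum R).card := by
          refine Finset.card_le_card ?_
          intro x hx
          simp only [Finset.mem_image, Finset.mem_univ, true_and] at hx
          obtain ⟨a, rfl⟩ := hx
          rcases hg a with ⟨v, hx, hvL, _⟩ | ⟨v, hx, hvR, _⟩ <;> rw [hx]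
          · exact Finset.inl_mem_disjSum.mpr hvL
          · exact Finset.inr_mem_disjSum.mpr hvR
      _ = L.card + R.card := Finset.card_disjSum _ _
end

section
/- Let π_1, …, π_l (l ≥ 2) be treks in a mixed graph G, where π_j is a trek from a_j to b_j, such that no two of them have a same-sided intersection, and suppose that for each j (indices taken modulo l) there is a vertex v_j lying on the left side of π_j and on the right side of π_{j+1}. Then there exist treks σ_1, …, σ_l, where σ_j is a trek from a_j to b_{j+1} (indices modulo l), such that the total length of σ_1, …, σ_l is strictly smaller than the total length of π_1, …, π_l and no two of σ_1, …, σ_l have a same-sided intersection. -/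
open Classical

variable {V : Type}

/-- AUX -/
lemma exists_suffix_head {V : Type} :
    ∀ {L : List V} (hL : L ≠ []) {v : V}, v ∈ L →
    ∃ (L' : List V) (h' : L' ≠ []), L' <:+ L ∧ L'.head h' = v ∧
      L'.getLast h' = L.getLast hL ∧ L'.length ≤ L.length ∧
      (L'.length = L.length → v = L.head hL) := by
  intro L
  induction L with
  | nil => intro h; exact absurd rfl h
  | cons a t ih =>
    intro hL v hv
    by_cases hva : v = a
    · exact ⟨a :: t, hL, List.suffix_refl _, hva.symm, rfl, le_refl _, fun _ => hva⟩
    · have hvt : v ∈ t := by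
        rcases List.mem_cons.1 hv with h | h
        · exact absurd h hva
        · exact h
      have htne : t ≠ [] := List.ne_nil_of_mem hvt
      obtain ⟨L', h', hsuf, hhead, hlast, hlen, _⟩ := ih htne hvt
      refine ⟨L', h', hsuf.trans (List.suffix_cons a t), hhead, ?_, ?_, ?_⟩
      · rw [hlast, List.getLast_cons htne]
      · exact hlen.trans (Nat.le_succ _)
      · intro heq
        exfalso
        have : L'.length ≤ t.length := hlen
        rw [heq] at this
        simp [List.length_cons] at this


/-- cycle rearrangement.  Given treks `π 0, …, π (l-1)` (l ≥ 2)
without same-sided intersections such that for each `j` some vertex lies on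
the left side of `π j` and the right side of `π (j+1)` (cyclically), there
are treks `σ j` from `(π j).src` to `(π (j+1)).dst` of strictly smaller total
length, again without same-sided intersections. -/
theorem cycle_rearrangement
    {V : Type} (G : MixedGraph V) (l : ℕ) [NeZero l] (hl : 2 ≤ l)
    (π : Fin l → Trek G)
    (hss : ∀ j j' : Fin l, j ≠ j' → ¬ Trek.SameSided (π j) (π j'))
    (hcyc : ∀ j : Fin l, ∃ v, (π j).onLeft v ∧ (π (j + 1)).onRight v) :
    ∃ σ : Fin l → Trek G,
      (∀ j : Fin l, (σ j).src = (π j).src ∧ (σ j).dst = (π (j + 1)).dst) ∧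
      (∑ j : Fin l, (σ j).length) < (∑ j : Fin l, (π j).length) ∧
      (∀ j j' : Fin l, j ≠ j' → ¬ Trek.SameSided (σ j) (σ j')) := by
  classical
  choose v hvL hvR using hcyc
  have hLs : ∀ j, ∃ (L' : List V) (h' : L' ≠ []), L' <:+ (π j).left ∧
      L'.head h' = v j ∧ L'.getLast h' = (π j).left.getLast (π j).left_ne ∧
      L'.length ≤ (π j).left.length ∧
      (L'.length = (π j).left.length → v j = (π j).left.head (π j).left_ne) :=
    fun j => exists_suffix_head (π j).left_ne (hvL j)
  choose Lf Lne Lsuf Lhead Llast Llen Leq using hLs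
  have hRs : ∀ j, ∃ (R' : List V) (h' : R' ≠ []), R' <:+ (π (j+1)).right ∧
      R'.head h' = v j ∧ R'.getLast h' = (π (j+1)).right.getLast (π (j+1)).right_ne ∧
      R'.length ≤ (π (j+1)).right.length ∧
      (R'.length = (π (j+1)).right.length → v j = (π (j+1)).right.head (π (j+1)).right_ne) :=
    fun j => exists_suffix_head (π (j+1)).right_ne (hvR j)
  choose Rf Rne Rsuf Rhead Rlast Rlen Req using hRs
  refine ⟨fun j => ⟨Lf j, Rf j, Lne j, Rne j,
      (π j).left_chain.suffix (Lsuf j),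
      (π (j+1)).right_chain.suffix (Rsuf j),
      Or.inl (by rw [Lhead j, Rhead j])⟩, ?_, ?_, ?_⟩
  · intro j
    exact ⟨Llast j, Rlast j⟩
  · -- length inequality
    have hσlen : ∀ j : Fin l, (Trek.mk (Lf j) (Rf j) (Lne j) (Rne j)
        ((π j).left_chain.suffix (Lsuf j)) ((π (j+1)).right_chain.suffix (Rsuf j))
        (Or.inl (by rw [Lhead j, Rhead j])) : Trek G).length
        = ((Lf j).length - 1) + ((Rf j).length - 1) := by
      intro j
      unfold Trek.length
      rw [if_pos (by rw [Lhead j, Rhead j] : (Lf j).head (Lne j) = (Rf j).head (Rne j))]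
      rfl
    have hπlen : ∀ j : Fin l, (π j).length =
        ((π j).left.length - 1) + ((π j).right.length - 1) +
        (if (π j).left.head (π j).left_ne = (π j).right.head (π j).right_ne then 0 else 1) := by
      intro j; rfl
    have h01 : (0 : Fin l) ≠ 1 := by
      intro h
      have h2 := congrArg Fin.val h
      rw [Fin.val_one'] at h2
      simp [Nat.mod_eq_of_lt hl] at h2
    -- strictness at j = 0
    have h0 : (Lf 0).length < (π 0).left.length ∨
        (π 0).left.head (π 0).left_ne ≠ (π 0).right.head (π 0).right_ne := by
      by_contra hcon
      push_neg at hcon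
      obtain ⟨hge, heq⟩ := hcon
      have hlen0 : (Lf 0).length = (π 0).left.length := le_antisymm (Llen 0) hge
      have hv0 : v 0 = (π 0).left.head (π 0).left_ne := Leq 0 hlen0
      have hr0 : (π 0).onRight (v 0) := by
        rw [hv0, heq]; exact List.head_mem _
      have hr1 : (π 1).onRight (v 0) := by
        have : v 0 ∈ Rf 0 := (Rhead 0) ▸ List.head_mem _
        have h1 : (0 : Fin l) + 1 = 1 := zero_add 1
        exact h1 ▸ (Rsuf 0).subset this
      exact hss 0 1 h01 ⟨v 0, Or.inr ⟨hr0, hr1⟩⟩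
    simp only [hσlen, hπlen]
    rw [Finset.sum_add_distrib, Finset.sum_add_distrib, Finset.sum_add_distrib]
    have hB : (∑ j : Fin l, ((Rf j).length - 1)) ≤ ∑ j : Fin l, ((π j).right.length - 1) := by
      have := Fintype.sum_equiv (Equiv.addRight (1 : Fin l))
        (fun j => ((π (j+1)).right.length - 1)) (fun j => ((π j).right.length - 1))
        (fun j => rfl)
      calc (∑ j : Fin l, ((Rf j).length - 1))
          ≤ ∑ j : Fin l, ((π (j+1)).right.length - 1) :=
            Finset.sum_le_sum (fun j _ => Nat.sub_le_sub_right (Rlen j) 1)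
        _ = _ := this
    rcases h0 with h0 | h0
    · have hA : (∑ j : Fin l, ((Lf j).length - 1)) < ∑ j : Fin l, ((π j).left.length - 1) := by
        refine Finset.sum_lt_sum (fun j _ => Nat.sub_le_sub_right (Llen j) 1) ⟨0, Finset.mem_univ _, ?_⟩
        have h1 : 1 ≤ (Lf 0).length := List.length_pos_iff.2 (Lne 0)
        omega
      have := Nat.add_lt_add_of_lt_of_le hA hB
      omega
    · have hA : (∑ j : Fin l, ((Lf j).length - 1)) ≤ ∑ j : Fin l, ((π j).left.length - 1) :=
        Finset.sum_le_sum (fun j _ => Nat.sub_le_sub_right (Llen j) 1)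
      have hE : 1 ≤ ∑ j : Fin l, (if (π j).left.head (π j).left_ne = (π j).right.head (π j).right_ne then 0 else 1) := by
        have := Finset.single_le_sum (f := fun j : Fin l =>
          (if (π j).left.head (π j).left_ne = (π j).right.head (π j).right_ne then 0 else 1))
          (fun j _ => Nat.zero_le _) (Finset.mem_univ 0)
        simp only [if_neg h0] at this
        exact this
      omega
  · intro j j' hne hsame
    obtain ⟨w, hw⟩ := hsame
    rcases hw with ⟨h1, h2⟩ | ⟨h1, h2⟩
    · exact hss j j' hne ⟨w, Or.inl ⟨(Lsuf j).subset h1, (Lsuf j').subset h2⟩⟩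
    · refine hss (j+1) (j'+1) (fun h => hne (add_right_cancel h)) ⟨w, Or.inr ⟨?_, ?_⟩⟩
      · exact (Rsuf j).subset h1
      · exact (Rsuf j').subset h2
end

section
/- Let G be an ADMG, let I and X be vertex sets, and let k ≥ 1. Suppose there exists at least one k-tuple of treks, each from a vertex of I to a vertex of X, no two of which have a same-sided intersection. Let (π_1, …, π_k) be such a k-tuple of minimal total length, and define π_a ≼ π_b if and only if a ≠ b and some vertex lies on the left side of π_a and on the right side of π_b. Then ≼ has no cycle: there is no sequence of distinct indices j_1, …, j_l with l ≥ 2 such that π_{j_1} ≼ π_{j_2} ≼ … ≼ π_{j_l} ≼ π_{j_1}. -/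
open Classical

variable {V : Type}

/-- Cyclic successor on `Fin l`. -/
def cycSucc (l : ℕ) (hl : 0 < l) (m : Fin l) : Fin l :=
  ⟨(m.val + 1) % l, Nat.mod_lt _ hl⟩

section AuxHelpers

variable {V : Type} {G : MixedGraph V}

/-- The suffix of a list starting at the first occurrence of `v`. -/
noncomputable def suffFrom (l : List V) (v : V) : List V :=
  l.dropWhile (fun x => decide (x ≠ v))

lemma suffFrom_suffix (l : List V) (v : V) : suffFrom l v <:+ l :=
  List.dropWhile_suffix _

lemma suffFrom_ne_nil {l : List V} {v : V} (h : v ∈ l) : suffFrom l v ≠ [] := by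
  intro hnil
  have := List.dropWhile_eq_nil_iff.1 hnil v h
  simp at this

lemma head_suffFrom {l : List V} {v : V} (h : v ∈ l) :
    (suffFrom l v).head (suffFrom_ne_nil h) = v := by
  have := List.head_dropWhile_not (fun x => decide (x ≠ v)) (l := l) (suffFrom_ne_nil h)
  simpa [suffFrom] using this

lemma length_suffFrom_le (l : List V) (v : V) : (suffFrom l v).length ≤ l.length :=
  (suffFrom_suffix l v).sublist.length_le

lemma head_eq_of_suffFrom_length {l : List V} {v : V} (h : v ∈ l)
    (hlen : l.length ≤ (suffFrom l v).length) (hl : l ≠ []) : l.head hl = v := by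
  have heq : suffFrom l v = l :=
    (suffFrom_suffix l v).sublist.eq_of_length
      (le_antisymm (length_suffFrom_le l v) hlen)
  have h1 : l.head? = some v := by
    rw [← heq, List.head?_eq_head (suffFrom_ne_nil h), head_suffFrom h]
  rw [List.head?_eq_head hl] at h1
  exact Option.some.inj h1

lemma getLast_suffFrom {l : List V} {v : V} (h : v ∈ l) (hl : l ≠ []) :
    (suffFrom l v).getLast (suffFrom_ne_nil h) = l.getLast hl := by
  obtain ⟨t, ht⟩ := suffFrom_suffix l v
  have e1 := List.getLast_append_of_right_ne_nil t (suffFrom l v) (suffFrom_ne_nil h)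
  have e2 : l.getLast? = some ((suffFrom l v).getLast (suffFrom_ne_nil h)) :=
    calc l.getLast? = (t ++ suffFrom l v).getLast? := by rw [ht]
      _ = some ((t ++ suffFrom l v).getLast
            (List.append_ne_nil_of_right_ne_nil t (suffFrom_ne_nil h))) :=
        List.getLast?_eq_getLast _
      _ = some ((suffFrom l v).getLast (suffFrom_ne_nil h)) := congrArg some e1
  rw [List.getLast?_eq_getLast hl] at e2
  exact (Option.some.inj e2).symm

lemma chain'_suffFrom {l : List V} {v : V} {r : V → V → Prop}
    (hc : l.Chain' r) : (suffFrom l v).Chain' r := by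
  obtain ⟨t, ht⟩ := suffFrom_suffix l v
  rw [← ht] at hc
  exact (List.isChain_append.1 hc).2.1

/-- Splicing two treks at a common vertex `v` on the left side of `s` and the
right side of `t`. -/
noncomputable def splice (s t : Trek G) (v : V) (h1 : v ∈ s.left) (h2 : v ∈ t.right) :
    Trek G where
  left := suffFrom s.left v
  right := suffFrom t.right v
  left_ne := suffFrom_ne_nil h1
  right_ne := suffFrom_ne_nil h2
  left_chain := chain'_suffFrom s.left_chain
  right_chain := chain'_suffFrom t.right_chain
  top_ok := Or.inl (by rw [head_suffFrom h1, head_suffFrom h2])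

lemma splice_src (s t : Trek G) (v : V) (h1 : v ∈ s.left) (h2 : v ∈ t.right) :
    (splice s t v h1 h2).src = s.src :=
  getLast_suffFrom h1 s.left_ne

lemma splice_dst (s t : Trek G) (v : V) (h1 : v ∈ s.left) (h2 : v ∈ t.right) :
    (splice s t v h1 h2).dst = t.dst :=
  getLast_suffFrom h2 t.right_ne

lemma splice_onLeft (s t : Trek G) (v : V) (h1 : v ∈ s.left) (h2 : v ∈ t.right)
    {x : V} (hx : (splice s t v h1 h2).onLeft x) : s.onLeft x :=
  (suffFrom_suffix s.left v).subset hx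

lemma splice_onRight (s t : Trek G) (v : V) (h1 : v ∈ s.left) (h2 : v ∈ t.right)
    {x : V} (hx : (splice s t v h1 h2).onRight x) : t.onRight x :=
  (suffFrom_suffix t.right v).subset hx

lemma splice_length (s t : Trek G) (v : V) (h1 : v ∈ s.left) (h2 : v ∈ t.right) :
    (splice s t v h1 h2).length =
      ((suffFrom s.left v).length - 1) + ((suffFrom t.right v).length - 1) := by
  have hh : (splice s t v h1 h2).left.head (splice s t v h1 h2).left_ne =
      (splice s t v h1 h2).right.head (splice s t v h1 h2).right_ne := by
    show (suffFrom s.left v).head (suffFrom_ne_nil h1) =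
      (suffFrom t.right v).head (suffFrom_ne_nil h2)
    rw [head_suffFrom h1, head_suffFrom h2]
  unfold Trek.length
  rw [if_pos hh]
  simp [splice]

lemma Trek.length_lower (t : Trek G) :
    (t.left.length - 1) + (t.right.length - 1) ≤ t.length := by
  unfold Trek.length
  split <;> omega

lemma Trek.length_upper (t : Trek G) :
    t.length ≤ (t.left.length - 1) + (t.right.length - 1) + 1 := by
  unfold Trek.length
  split <;> omega

lemma Trek.head_eq_of_length_le (t : Trek G)
    (h : t.length ≤ (t.left.length - 1) + (t.right.length - 1)) :
    t.left.head t.left_ne = t.right.head t.right_ne := by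
  by_contra hc
  unfold Trek.length at h
  rw [if_neg hc] at h
  omega

end AuxHelpers

/-- a minimal-total-length system of treks from `I` to `X`
without same-sided intersections admits no cycle in the precedence relation
`π a ≼ π b ⟺ a ≠ b ∧ some vertex is on the left side of π a and the right
side of π b`. -/
theorem minimal_trek_system_precedence_has_no_cycle
    {V : Type} (G : MixedGraph V) (hG : G.Acyclic) (I X : Set V)
    (k : ℕ) (hk : 1 ≤ k) (π : Fin k → Trek G)
    (hmem : ∀ a : Fin k, (π a).src ∈ I ∧ (π a).dst ∈ X)
    (hss : ∀ a b : Fin k, a ≠ b → ¬ Trek.SameSided (π a) (π b))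
    (hmin : ∀ π' : Fin k → Trek G, (∀ a : Fin k, (π' a).src ∈ I ∧ (π' a).dst ∈ X) →
      (∀ a b : Fin k, a ≠ b → ¬ Trek.SameSided (π' a) (π' b)) →
      (∑ a : Fin k, (π a).length) ≤ ∑ a : Fin k, (π' a).length) :
    ¬ ∃ (l : ℕ) (hl : 2 ≤ l) (j : Fin l → Fin k), Function.Injective j ∧
        ∀ m : Fin l,
          j m ≠ j (cycSucc l (by omega) m) ∧
          ∃ v, (π (j m)).onLeft v ∧ (π (j (cycSucc l (by omega) m))).onRight v := by
  rintro ⟨l, hl, j, hinj, hcyc⟩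
  have hl0 : 0 < l := by omega
  choose hne v hvL hvR using hcyc
  set σ : Fin l → Fin l := cycSucc l hl0 with hσdef
  have hσinj : Function.Injective σ := by
    intro a b hab
    have h1 : ((a : ℕ) + 1) % l = ((b : ℕ) + 1) % l := congrArg Fin.val hab
    have ha := a.isLt
    have hb := b.isLt
    apply Fin.ext
    have step : ∀ x : ℕ, x < l → (x + 1) % l = x + 1 ∨ (x + 1 = l ∧ (x + 1) % l = 0) := by
      intro x hx
      rcases Nat.lt_or_ge (x + 1) l with h | h
      · exact Or.inl (Nat.mod_eq_of_lt h)
      · have hxe : x + 1 = l := by omega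
        rw [hxe]
        exact Or.inr ⟨rfl, Nat.mod_self l⟩
    rcases step a ha with h | h <;> rcases step b hb with h' | h' <;> omega
  have hσbij : Function.Bijective σ := Finite.injective_iff_bijective.1 hσinj
  have hvL' : ∀ m, v m ∈ (π (j m)).left := hvL
  have hvR' : ∀ m, v m ∈ (π (j (σ m))).right := hvR
  -- the rerouted treks
  let τ : Fin l → Trek G := fun m =>
    splice (π (j m)) (π (j (σ m))) (v m) (hvL' m) (hvR' m)
  -- the new system
  let π' : Fin k → Trek G := fun a => if h : ∃ m, j m = a then τ h.choose else π a
  have hπ'j : ∀ m, π' (j m) = τ m := by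
    intro m
    have hex : ∃ m', j m' = j m := ⟨m, rfl⟩
    show (if h : ∃ m', j m' = j m then τ h.choose else π (j m)) = τ m
    rw [dif_pos hex]
    exact congrArg τ (hinj hex.choose_spec)
  have hπ'nj : ∀ a, (∀ m, j m ≠ a) → π' a = π a := by
    intro a ha
    show (if h : ∃ m, j m = a then τ h.choose else π a) = π a
    rw [dif_neg]
    rintro ⟨m, hm⟩
    exact ha m hm
  -- right-side owner
  let r : Fin k → Fin k := fun a => if h : ∃ m, j m = a then j (σ h.choose) else a
  have hrj : ∀ m, r (j m) = j (σ m) := by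
    intro m
    have hex : ∃ m', j m' = j m := ⟨m, rfl⟩
    show (if h : ∃ m', j m' = j m then j (σ h.choose) else j m) = j (σ m)
    rw [dif_pos hex, hinj hex.choose_spec]
  have hrnj : ∀ a, (∀ m, j m ≠ a) → r a = a := by
    intro a ha
    show (if h : ∃ m, j m = a then j (σ h.choose) else a) = a
    rw [dif_neg]
    rintro ⟨m, hm⟩
    exact ha m hm
  have hrinj : Function.Injective r := by
    intro a b hab
    by_cases ha : ∃ m, j m = a <;> by_cases hb' : ∃ m, j m = b
    · obtain ⟨ma, rfl⟩ := ha
      obtain ⟨mb, rfl⟩ := hb'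
      rw [hrj, hrj] at hab
      exact congrArg j (hσinj (hinj hab))
    · obtain ⟨ma, rfl⟩ := ha
      rw [hrj, hrnj b (fun m hm => hb' ⟨m, hm⟩)] at hab
      exact absurd ⟨σ ma, hab⟩ hb'
    · obtain ⟨mb, rfl⟩ := hb'
      rw [hrj, hrnj a (fun m hm => ha ⟨m, hm⟩)] at hab
      exact absurd ⟨σ mb, hab.symm⟩ ha
    · rw [hrnj a (fun m hm => ha ⟨m, hm⟩), hrnj b (fun m hm => hb' ⟨m, hm⟩)] at hab
      exact hab
  -- side containments
  have hLc : ∀ a x, (π' a).onLeft x → (π a).onLeft x := by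
    intro a x hx
    by_cases h : ∃ m, j m = a
    · obtain ⟨m, rfl⟩ := h
      rw [hπ'j m] at hx
      exact splice_onLeft _ _ _ _ _ hx
    · rwa [hπ'nj a (fun m hm => h ⟨m, hm⟩)] at hx
  have hRc : ∀ a x, (π' a).onRight x → (π (r a)).onRight x := by
    intro a x hx
    by_cases h : ∃ m, j m = a
    · obtain ⟨m, rfl⟩ := h
      rw [hπ'j m] at hx
      rw [hrj m]
      exact splice_onRight _ _ _ _ _ hx
    · rw [hrnj a (fun m hm => h ⟨m, hm⟩)]
      rwa [hπ'nj a (fun m hm => h ⟨m, hm⟩)] at hx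
  -- the new system has no same-sided intersections
  have hss' : ∀ a b : Fin k, a ≠ b → ¬ Trek.SameSided (π' a) (π' b) := by
    rintro a b hab ⟨x, hx | hx⟩
    · exact hss a b hab ⟨x, Or.inl ⟨hLc a x hx.1, hLc b x hx.2⟩⟩
    · exact hss (r a) (r b) (fun h => hab (hrinj h))
        ⟨x, Or.inr ⟨hRc a x hx.1, hRc b x hx.2⟩⟩
  -- the new system joins I to X
  have hmem' : ∀ a : Fin k, (π' a).src ∈ I ∧ (π' a).dst ∈ X := by
    intro a
    constructor
    · by_cases h : ∃ m, j m = a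
      · obtain ⟨m, rfl⟩ := h
        rw [hπ'j m]
        rw [show (τ m).src = (π (j m)).src from splice_src _ _ _ _ _]
        exact (hmem (j m)).1
      · rw [hπ'nj a (fun m hm => h ⟨m, hm⟩)]
        exact (hmem a).1
    · by_cases h : ∃ m, j m = a
      · obtain ⟨m, rfl⟩ := h
        rw [hπ'j m]
        rw [show (τ m).dst = (π (j (σ m))).dst from splice_dst _ _ _ _ _]
        exact (hmem (j (σ m))).2
      · rw [hπ'nj a (fun m hm => h ⟨m, hm⟩)]
        exact (hmem a).2
  -- sum decompositions
  have hsum : ∀ f : Fin k → ℕ,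
      ∑ a, f a = (∑ m, f (j m)) + ∑ a ∈ (Finset.univ.image j)ᶜ, f a := by
    intro f
    rw [← Finset.sum_add_sum_compl (Finset.univ.image j) f,
      Finset.sum_image (fun x _ y _ h => hinj h)]
  have hout : ∑ a ∈ (Finset.univ.image j)ᶜ, (π' a).length
      = ∑ a ∈ (Finset.univ.image j)ᶜ, (π a).length := by
    refine Finset.sum_congr rfl fun a ha => ?_
    simp only [Finset.mem_compl, Finset.mem_image, Finset.mem_univ, true_and,
      not_exists] at ha
    rw [hπ'nj a ha]
  have htot' : ∑ a, (π' a).length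
      = (∑ m, (τ m).length) + ∑ a ∈ (Finset.univ.image j)ᶜ, (π a).length := by
    rw [hsum (fun a => (π' a).length), hout]
    congr 1
    exact Finset.sum_congr rfl fun m _ => by rw [hπ'j m]
  have htot : ∑ a, (π a).length
      = (∑ m, (π (j m)).length) + ∑ a ∈ (Finset.univ.image j)ᶜ, (π a).length :=
    hsum (fun a => (π a).length)
  -- reindexing of right-hand lengths along the cycle
  have hreidx : ∑ m, ((π (j (σ m))).right.length - 1)
      = ∑ m, ((π (j m)).right.length - 1) :=
    hσbij.sum_comp (fun m => (π (j m)).right.length - 1)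
  -- termwise inequality
  have hterm : ∀ m ∈ Finset.univ,
      (τ m).length + ((π (j m)).right.length - 1)
        ≤ (π (j m)).length + ((π (j (σ m))).right.length - 1) := by
    intro m _
    have hτ : (τ m).length = ((suffFrom (π (j m)).left (v m)).length - 1)
        + ((suffFrom (π (j (σ m))).right (v m)).length - 1) :=
      splice_length _ _ _ _ _
    have hA := length_suffFrom_le (π (j m)).left (v m)
    have hB := length_suffFrom_le (π (j (σ m))).right (v m)
    have hlow := (π (j m)).length_lower
    omega
  have hsumterm : ∑ m, ((τ m).length + ((π (j m)).right.length - 1))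
      ≤ ∑ m, ((π (j m)).length + ((π (j (σ m))).right.length - 1)) :=
    Finset.sum_le_sum hterm
  rw [Finset.sum_add_distrib, Finset.sum_add_distrib, hreidx] at hsumterm
  have hτ_le : ∑ m, (τ m).length ≤ ∑ m, (π (j m)).length := by omega
  have hmin' := hmin π' hmem' hss'
  have hEq : ∑ m, (τ m).length = ∑ m, (π (j m)).length := by omega
  -- termwise equality
  have hterm_eq : ∀ m ∈ Finset.univ,
      (τ m).length + ((π (j m)).right.length - 1)
        = (π (j m)).length + ((π (j (σ m))).right.length - 1) := by
    refine (Finset.sum_eq_sum_iff_of_le hterm).1 ?_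
    rw [Finset.sum_add_distrib, Finset.sum_add_distrib, hreidx, hEq]
  -- per-index consequences
  have key : ∀ m,
      (suffFrom (π (j m)).left (v m)).length = (π (j m)).left.length ∧
      (suffFrom (π (j (σ m))).right (v m)).length = (π (j (σ m))).right.length ∧
      (π (j m)).length ≤ ((π (j m)).left.length - 1) + ((π (j m)).right.length - 1) := by
    intro m
    have h1 := hterm_eq m (Finset.mem_univ m)
    have hτ : (τ m).length = ((suffFrom (π (j m)).left (v m)).length - 1)
        + ((suffFrom (π (j (σ m))).right (v m)).length - 1) :=
      splice_length _ _ _ _ _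
    have hA := length_suffFrom_le (π (j m)).left (v m)
    have hB := length_suffFrom_le (π (j (σ m))).right (v m)
    have hA1 : 1 ≤ (suffFrom (π (j m)).left (v m)).length :=
      List.length_pos_iff.mpr (suffFrom_ne_nil (hvL' m))
    have hB1 : 1 ≤ (suffFrom (π (j (σ m))).right (v m)).length :=
      List.length_pos_iff.mpr (suffFrom_ne_nil (hvR' m))
    have hlow := (π (j m)).length_lower
    have hup := (π (j m)).length_upper
    omega
  -- heads
  have hheadL : ∀ m, (π (j m)).left.head (π (j m)).left_ne = v m := fun m =>
    head_eq_of_suffFrom_length (hvL' m) (le_of_eq (key m).1.symm) _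
  have hheadR : ∀ m, (π (j (σ m))).right.head (π (j (σ m))).right_ne = v m := fun m =>
    head_eq_of_suffFrom_length (hvR' m) (le_of_eq (key m).2.1.symm) _
  have hheads : ∀ m, (π (j m)).left.head (π (j m)).left_ne
      = (π (j m)).right.head (π (j m)).right_ne := fun m =>
    (π (j m)).head_eq_of_length_le (key m).2.2
  -- derive a same-sided intersection in the original system
  have m0 : Fin l := ⟨0, hl0⟩
  have h2 : (π (j (σ m0))).left.head (π (j (σ m0))).left_ne = v m0 := by
    rw [hheads (σ m0), hheadR m0]
  have h3 : (π (j (σ m0))).onLeft (v m0) := by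
    rw [← h2]
    exact List.head_mem _
  exact hss (j m0) (j (σ m0)) (hne m0) ⟨v m0, Or.inl ⟨hvL' m0, h3⟩⟩
end

section
/- Let G be an ADMG and let A and B be vertex sets such that every t-separator (L, R) of A and B in G has size at least k, where k ≥ 1. Then there exist k treks in G, each from a vertex of A to a vertex of B, no two of which have a same-sided intersection (in particular, their left endpoints are k distinct vertices of A and their right endpoints are k distinct vertices of B). -/
open Classical

variable {V : Type}

namespace MengerAux
variable {W : Type}

/-- A path for relation `D` from `A` to `B`. -/
def Pth (D : W → W → Prop) (A B : Set W) (l : List W) : Prop :=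
  ∃ h : l ≠ [], l.Chain' D ∧ l.head h ∈ A ∧ l.getLast h ∈ B

/-- `S` separates `A` from `B` (w.r.t. `D`-paths). -/
def SepD (D : W → W → Prop) (A B : Set W) (S : Finset W) : Prop :=
  ∀ l, Pth D A B l → ∃ v ∈ S, v ∈ l

lemma getLast_congr {l m : List W} (hl : l ≠ []) (hm : m ≠ [])
    (h : l.getLast? = m.getLast?) : l.getLast hl = m.getLast hm := by
  have h1 := List.getLast?_eq_getLast hl
  have h2 := List.getLast?_eq_getLast hm
  rw [h1, h2] at h; exact Option.some_injective _ h

/-- dedup: every chain has a nodup sub-chain with the same ends. -/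
lemma dedup_chain (D : W → W → Prop) :
    ∀ (n : ℕ) (l : List W) (_ : l.length ≤ n) (hl : l ≠ []) (_ : l.Chain' D),
    ∃ m, ∃ hm : m ≠ [], m.Chain' D ∧ m.Nodup ∧ m.head hm = l.head hl ∧
      m.getLast hm = l.getLast hl ∧ ∀ x ∈ m, x ∈ l := by
  intro n
  induction n with
  | zero => intro l hn hl _; cases l with
            | nil => exact absurd rfl hl
            | cons a t => simp at hn
  | succ n ih =>
    intro l hn hl hc
    cases l with
    | nil => exact absurd rfl hl
    | cons a t =>
      by_cases ha : a ∈ t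
      · obtain ⟨u, w, rfl⟩ := List.append_of_mem ha
        have hsuf : (a :: w) <:+ (a :: (u ++ a :: w)) := by
          refine List.IsSuffix.trans (List.suffix_append u (a :: w)) ?_
          exact List.suffix_cons a (u ++ a :: w)
        have hlen : (a :: w).length ≤ n := by
          simp only [List.length_cons, List.length_append] at hn ⊢; omega
        have hcw : (a :: w).Chain' D := hc.suffix hsuf
        obtain ⟨m, hm, hmc, hmn, hmh, hml, hmsub⟩ :=
          ih (a :: w) hlen (by simp) hcw
        refine ⟨m, hm, hmc, hmn, ?_, ?_, fun x hx => hsuf.subset (hmsub x hx)⟩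
        · rw [hmh]; rfl
        · rw [hml]
          apply getLast_congr
          have : a :: (u ++ a :: w) = (a :: u) ++ (a :: w) := by simp
          rw [this, List.getLast?_append_of_ne_nil _ (by simp)]
      · cases t with
        | nil =>
          exact ⟨[a], by simp, List.isChain_singleton a, List.nodup_singleton a,
            rfl, rfl, by simp⟩
        | cons b t' =>
          have hct : (b :: t').Chain' D := (List.isChain_cons_cons.mp hc).2
          have hlen : (b :: t').length ≤ n := by simp at hn ⊢; omega
          obtain ⟨m, hm, hmc, hmn, hmh, hml, hmsub⟩ :=
            ih (b :: t') hlen (by simp) hct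
          have hsubt : ∀ x ∈ m, x ∈ b :: t' := hmsub
          refine ⟨a :: m, by simp, ?_, ?_, rfl, ?_, ?_⟩
          · cases m with
            | nil => exact absurd rfl hm
            | cons c m' =>
              refine List.isChain_cons_cons.mpr ⟨?_, hmc⟩
              have : c = b := hmh
              rw [this]; exact (List.isChain_cons_cons.mp hc).1
          · refine List.nodup_cons.mpr ⟨fun hmem => ha (hsubt a hmem), hmn⟩
          · rw [List.getLast_cons hm, hml]
            exact (List.getLast_cons (by simp)).symm
          · intro x hx
            rcases List.mem_cons.mp hx with rfl | hx
            · exact List.mem_cons_self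
            · exact List.mem_cons_of_mem a (hsubt x hx)


/-- Prefix of a chain up to its first vertex in `S`. -/
lemma prefix_to_set (D : W → W → Prop) (S : Set W) :
    ∀ (l : List W) (hl : l ≠ []) (_ : l.Chain' D) (_ : ∃ v ∈ l, v ∈ S),
    ∃ p, ∃ hp : p ≠ [], p.Chain' D ∧ p.head hp = l.head hl ∧
      p.getLast hp ∈ S ∧ (∀ z ∈ p, z ∈ S → z = p.getLast hp) ∧ p <+: l := by
  intro l
  induction l with
  | nil => intro hl; exact absurd rfl hl
  | cons a t ih =>
    intro hl hc hv
    by_cases haS : a ∈ S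
    · exact ⟨[a], by simp, List.isChain_singleton a, rfl, haS,
        by intro z hz _; simpa using hz, ⟨t, rfl⟩⟩
    · obtain ⟨v, hvl, hvS⟩ := hv
      have hvt : v ∈ t := by
        rcases List.mem_cons.mp hvl with rfl | h
        · exact absurd hvS haS
        · exact h
      have ht : t ≠ [] := by rintro rfl; simp at hvt
      obtain ⟨p, hp, hpc, hph, hpl, hponly, hppre⟩ :=
        ih ht (hc.suffix (List.suffix_cons a t)) ⟨v, hvt, hvS⟩
      refine ⟨a :: p, by simp, ?_, rfl, ?_, ?_, ?_⟩
      · cases p with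
        | nil => exact absurd rfl hp
        | cons c p' =>
          refine List.isChain_cons_cons.mpr ⟨?_, hpc⟩
          have hcb : c = t.head ht := hph
          cases t with
          | nil => exact absurd rfl ht
          | cons b t' =>
            have : c = b := hcb
            rw [this]; exact (List.isChain_cons_cons.mp hc).1
      · rwa [List.getLast_cons hp]
      · intro z hz hzS
        rcases List.mem_cons.mp hz with rfl | hz
        · exact absurd hzS haS
        · rw [List.getLast_cons hp]; exact hponly z hz hzS
      · exact (List.prefix_cons_inj a).mpr hppre

/-- Suffix of a chain from its last vertex in `S`. -/
lemma suffix_from_set (D : W → W → Prop) (S : Set W) :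
    ∀ (l : List W) (hl : l ≠ []) (_ : l.Chain' D) (_ : ∃ v ∈ l, v ∈ S),
    ∃ p, ∃ hp : p ≠ [], p.Chain' D ∧ p.getLast hp = l.getLast hl ∧
      p.head hp ∈ S ∧ (∀ z ∈ p, z ∈ S → z = p.head hp) ∧ p <:+ l := by
  intro l hl hc hv
  have hlr : l.reverse ≠ [] := by simpa using hl
  have hcr : l.reverse.Chain' (flip D) := List.isChain_reverse.mpr hc
  obtain ⟨q, hq, hqc, hqh, hqS, hqonly, hqpre⟩ :=
    prefix_to_set (flip D) S l.reverse hlr hcr (by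
      obtain ⟨v, h1, h2⟩ := hv; exact ⟨v, by simpa using h1, h2⟩)
  have hqr : q.reverse ≠ [] := by simpa using hq
  refine ⟨q.reverse, hqr, ?_, ?_, ?_, ?_, ?_⟩
  · rw [List.Chain', List.isChain_reverse]
    exact hqc
  · rw [List.getLast_reverse]
    rw [hqh, List.head_reverse]
  · rw [List.head_reverse]; exact hqS
  · intro z hz hzS
    rw [List.head_reverse]
    exact hqonly z (by simpa using hz) hzS
  · obtain ⟨r, hr⟩ := hqpre
    refine ⟨r.reverse, ?_⟩
    have := congrArg List.reverse hr
    simpa using this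


/-- Either a chain avoids the special edge `(x,y)`, or it has a prefix that is a
chain avoiding it and ending at `x`. -/
lemma reach_or_avoid (D D' : W → W → Prop) (x y : W)
    (hxy : ∀ a b, D a b → D' a b ∨ (a = x ∧ b = y)) :
    ∀ (l : List W) (hl : l ≠ []) (_ : l.Chain' D),
    l.Chain' D' ∨ ∃ p, ∃ hp : p ≠ [], p.Chain' D' ∧ p.head hp = l.head hl ∧
      p.getLast hp = x ∧ p <+: l := by
  intro l
  induction l with
  | nil => intro hl; exact absurd rfl hl
  | cons a t ih =>
    intro hl hc
    cases t with
    | nil => exact Or.inl (List.isChain_singleton a)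
    | cons b t' =>
      rcases hxy a b (List.isChain_cons_cons.mp hc).1 with hD' | ⟨rfl, rfl⟩
      · rcases ih (by simp) (List.isChain_cons_cons.mp hc).2 with havoid | ⟨p, hp, hpc, hph, hpl, hppre⟩
        · exact Or.inl (List.isChain_cons_cons.mpr ⟨hD', havoid⟩)
        · refine Or.inr ⟨a :: p, by simp, ?_, rfl, ?_, (List.prefix_cons_inj a).mpr hppre⟩
          · cases p with
            | nil => exact absurd rfl hp
            | cons c p' =>
              have : c = b := hph
              exact List.isChain_cons_cons.mpr ⟨this ▸ hD', hpc⟩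
          · rw [List.getLast_cons hp]; exact hpl
      · exact Or.inr ⟨[a], by simp, List.isChain_singleton a, rfl, rfl, ⟨b :: t', rfl⟩⟩

/-- Reverse version: either avoids the edge, or has a suffix starting at `y`. -/
lemma reach_or_avoid_rev (D D' : W → W → Prop) (x y : W)
    (hxy : ∀ a b, D a b → D' a b ∨ (a = x ∧ b = y)) :
    ∀ (l : List W) (hl : l ≠ []) (_ : l.Chain' D),
    l.Chain' D' ∨ ∃ p, ∃ hp : p ≠ [], p.Chain' D' ∧ p.head hp = y ∧
      p.getLast hp = l.getLast hl ∧ p <:+ l := by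
  intro l hl hc
  have hlr : l.reverse ≠ [] := by simpa using hl
  have hcr : l.reverse.Chain' (flip D) := List.isChain_reverse.mpr hc
  rcases reach_or_avoid (flip D) (flip D') y x
      (fun a b h => by rcases hxy b a h with h' | ⟨h1, h2⟩
                       exacts [Or.inl h', Or.inr ⟨h2, h1⟩])
      l.reverse hlr hcr with havoid | ⟨p, hp, hpc, hph, hpl, hppre⟩
  · left
    have := List.isChain_reverse.mp havoid
    exact this
  · right
    have hqr : p.reverse ≠ [] := by simpa using hp
    refine ⟨p.reverse, hqr, ?_, ?_, ?_, ?_⟩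
    · rw [List.Chain', List.isChain_reverse]; exact hpc
    · rw [List.head_reverse]; exact hpl
    · rw [List.getLast_reverse, hph, List.head_reverse]
    · obtain ⟨r, hr⟩ := hppre
      exact ⟨r.reverse, by simpa using congrArg List.reverse hr⟩


lemma getLast_append_right {l₁ l₂ : List W} (h : l₂ ≠ []) (h' : l₁ ++ l₂ ≠ []) :
    (l₁ ++ l₂).getLast h' = l₂.getLast h :=
  getLast_congr h' h (List.getLast?_append_of_ne_nil l₁ h)

/-- If `la` is a chain that meets `S` only at its last vertex and `lb` is a chain
that meets `S` only at its first vertex, and they share a vertex `z ∉ S`, then we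
can build an `A`–`B` chain avoiding `S`, contradicting separation. -/
lemma head_congr {l m : List W} (hl : l ≠ []) (hm : m ≠ [])
    (h : l.head? = m.head?) : l.head hl = m.head hm := by
  rw [List.head?_eq_head hl, List.head?_eq_head hm] at h
  exact Option.some_injective _ h

lemma no_cross (D' : W → W → Prop) (A B : Set W) (S : Finset W)
    (hS : SepD D' A B S)
    (la lb : List W) (hla : la ≠ []) (hlb : lb ≠ [])
    (hna : la.Nodup) (hnb : lb.Nodup)
    (hca : la.Chain' D') (hcb : lb.Chain' D')
    (hA : la.head hla ∈ A) (hB : lb.getLast hlb ∈ B)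
    (honlya : ∀ w ∈ la, w ∈ S → w = la.getLast hla)
    (honlyb : ∀ w ∈ lb, w ∈ S → w = lb.head hlb)
    (z : W) (hza : z ∈ la) (hzb : z ∈ lb) (hzS : z ∉ S) : False := by
  obtain ⟨p, q, hpq⟩ := List.append_of_mem hza
  obtain ⟨p', q', hpq'⟩ := List.append_of_mem hzb
  subst hpq; subst hpq'
  have hcc : (p ++ z :: q').Chain' D' := by
    rw [List.Chain', List.isChain_split]
    exact ⟨(List.isChain_split.mp hca).1, (List.isChain_split.mp hcb).2⟩
  have hcne : p ++ z :: q' ≠ [] := by simp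
  have hhead : (p ++ z :: q').head hcne = (p ++ z :: q).head hla :=
    head_congr _ _ (by cases p <;> simp)
  have hlast : (p ++ z :: q').getLast hcne = (p' ++ z :: q').getLast hlb :=
    getLast_congr _ _ (by
      rw [List.getLast?_append_of_ne_nil _ (l₂ := z :: q') (by simp),
        List.getLast?_append_of_ne_nil _ (l₂ := z :: q') (by simp)])
  obtain ⟨v, hvS, hvc⟩ := hS (p ++ z :: q') ⟨hcne, hcc, hhead ▸ hA, hlast ▸ hB⟩
  rcases List.mem_append.mp hvc with hvp | hvzq
  · -- v ∈ p : then v = la.getLast ∈ z :: q, contradicting nodup of la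
    have hv_la : v ∈ p ++ z :: q := List.mem_append_left _ hvp
    have hveq : v = (z :: q).getLast (by simp) :=
      (honlya v hv_la hvS).trans (getLast_append_right (by simp) _)
    have hdisj : p.Disjoint (z :: q) := (List.nodup_append'.mp hna).2.2
    exact hdisj hvp (hveq ▸ List.getLast_mem _)
  · rcases List.mem_cons.mp hvzq with rfl | hvq'
    · exact hzS hvS
    · -- v ∈ q' : then v = lb.head ∈ p' ++ [z], contradicting nodup of lb
      have hv_lb : v ∈ p' ++ z :: q' := List.mem_append_right _ (List.mem_cons_of_mem _ hvq')
      have hveq : v = (p' ++ [z]).head (by simp) :=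
        (honlyb v hv_lb hvS).trans (head_congr _ _ (by cases p' <;> simp))
      have hnb' : ((p' ++ [z]) ++ q').Nodup := by simpa using hnb
      have hdisj : (p' ++ [z]).Disjoint q' := (List.nodup_append'.mp hnb').2.2
      exact hdisj (hveq ▸ List.head_mem _) hvq'


/-- Glue two chains sharing endpoint = startpoint. -/
lemma glue_path_eq (D : W → W → Prop) (la lb : List W) (hla : la ≠ []) (hlb : lb ≠ [])
    (hca : la.Chain' D) (hcb : lb.Chain' D)
    (heq : la.getLast hla = lb.head hlb) :
    ∃ c, ∃ hc : c ≠ [], c.Chain' D ∧ c.head hc = la.head hla ∧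
      c.getLast hc = lb.getLast hlb ∧ (∀ v ∈ c, v ∈ la ∨ v ∈ lb) ∧
      (la.Nodup → lb.Nodup → (∀ v ∈ la, v ∈ lb → v = lb.head hlb) → c.Nodup) := by
  refine ⟨la ++ lb.tail, by simp [hla], ?_, List.head_append_left hla, ?_, ?_, ?_⟩
  · rw [List.Chain', List.isChain_append]
    refine ⟨hca, hcb.tail, ?_⟩
    intro a ha b hb
    rw [List.getLast?_eq_getLast hla] at ha
    cases lb with
    | nil => exact absurd rfl hlb
    | cons h t =>
      have h1 : a = la.getLast hla := by simpa using ha.symm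
      have h2 := (List.isChain_cons.mp hcb).1 b (by simpa using hb)
      rw [h1, heq]; exact h2
  · cases lb with
    | nil => exact absurd rfl hlb
    | cons h t =>
      cases t with
      | nil => simpa using heq
      | cons h2 t2 =>
        rw [getLast_append_right (by simp)]
        exact (getLast_congr _ _ rfl).trans (List.getLast_cons (by simp)).symm
  · intro v hv
    rcases List.mem_append.mp hv with h | h
    · exact Or.inl h
    · exact Or.inr (List.mem_of_mem_tail h)
  · intro hna hnb honce
    rw [List.nodup_append']
    refine ⟨hna, hnb.sublist (List.tail_sublist lb), ?_⟩
    intro v hv1 hv2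
    have := honce v hv1 (List.mem_of_mem_tail hv2)
    cases lb with
    | nil => exact absurd rfl hlb
    | cons h t =>
      have hv : v = h := this
      exact (List.nodup_cons.mp hnb).1 (hv ▸ hv2)

/-- Glue two chains joined by an edge. -/
lemma glue_path_edge (D : W → W → Prop) (la lb : List W) (hla : la ≠ []) (hlb : lb ≠ [])
    (hca : la.Chain' D) (hcb : lb.Chain' D)
    (hedge : D (la.getLast hla) (lb.head hlb)) :
    ∃ c, ∃ hc : c ≠ [], c.Chain' D ∧ c.head hc = la.head hla ∧
      c.getLast hc = lb.getLast hlb ∧ (∀ v ∈ c, v ∈ la ∨ v ∈ lb) ∧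
      (la.Nodup → lb.Nodup → la.Disjoint lb → c.Nodup) := by
  refine ⟨la ++ lb, by simp [hla], ?_, List.head_append_left hla,
    getLast_append_right hlb _, fun v hv => List.mem_append.mp hv, ?_⟩
  · rw [List.Chain', List.isChain_append]
    refine ⟨hca, hcb, ?_⟩
    intro a ha b hb
    rw [List.getLast?_eq_getLast hla] at ha
    rw [List.head?_eq_head hlb] at hb
    have h1 : a = la.getLast hla := by simpa using ha.symm
    have h2 : b = lb.head hlb := by simpa using hb.symm
    rw [h1, h2]; exact hedge
  · intro hna hnb hd
    exact List.nodup_append'.mpr ⟨hna, hnb, hd⟩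

/-- A chain without duplicates satisfies the strengthened relation `R a b ∧ a ≠ b`. -/
lemma chain'_ne_of_nodup {R : W → W → Prop} :
    ∀ l : List W, l.Nodup → l.Chain' R → l.Chain' (fun a b => R a b ∧ a ≠ b) := by
  intro l
  induction l with
  | nil => intro _ _; exact List.isChain_nil
  | cons a t ih =>
    intro hn hc
    cases t with
    | nil => exact List.isChain_singleton a
    | cons b t' =>
      refine List.isChain_cons_cons.mpr ⟨⟨(List.isChain_cons_cons.mp hc).1, ?_⟩,
        ih (List.nodup_cons.mp hn).2 (List.isChain_cons_cons.mp hc).2⟩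
      intro hab
      exact (List.nodup_cons.mp hn).1 (hab ▸ List.mem_cons_self)

/-- Over the empty edge set every path is a singleton. -/
lemma singleton_of_chain_empty {l : List W} (hl : l ≠ [])
    (hc : l.Chain' (fun _ _ => False)) : ∃ v, l = [v] := by
  cases l with
  | nil => exact absurd rfl hl
  | cons a t =>
    cases t with
    | nil => exact ⟨a, rfl⟩
    | cons b t' => exact absurd (List.isChain_cons_cons.mp hc).1 (fun h => h)


lemma Pth_mono {D D' : W → W → Prop} {A B : Set W} {l : List W}
    (h : ∀ u v, D u v → D' u v) (hp : Pth D A B l) : Pth D' A B l := by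
  obtain ⟨hl, hc, ha, hb⟩ := hp
  exact ⟨hl, hc.imp h, ha, hb⟩

/-- Finite Menger: if every separator has at least `k` vertices then there
are `k` pairwise-disjoint nodup paths from `A` to `B`. -/
theorem finMenger :
    ∀ (n : ℕ) (E : Finset (W × W)) (_ : E.card ≤ n) (A B : Set W) (k : ℕ),
    (∀ S : Finset W, SepD (fun u v => (u, v) ∈ E) A B S → k ≤ S.card) →
    ∃ P : Fin k → List W,
      (∀ i, Pth (fun u v => (u, v) ∈ E) A B (P i) ∧ (P i).Nodup) ∧
      (∀ i j, i ≠ j → ∀ v, v ∈ P i → v ∉ P j) := by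
  intro n
  induction n with
  | zero =>
    intro E hcard A B k hsep
    have hE : E = ∅ := Finset.card_eq_zero.mp (Nat.le_zero.mp hcard)
    subst hE
    have hsing : ∀ l : List W, l.Chain' (fun u v => (u, v) ∈ (∅ : Finset (W × W))) →
        l ≠ [] → ∃ v, l = [v] := by
      intro l hc hl
      exact singleton_of_chain_empty hl (hc.imp (fun a b h => by simpa using h))
    have hT : ∃ T : Finset W, ↑T ⊆ A ∩ B ∧ T.card = k := by
      by_cases hfin : (A ∩ B).Finite
      · have hsepAB : SepD (fun u v => (u, v) ∈ (∅ : Finset (W × W))) A B hfin.toFinset := by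
          rintro l ⟨hl, hc, ha, hb⟩
          obtain ⟨v, rfl⟩ := hsing l hc hl
          refine ⟨v, ?_, by simp⟩
          simp only [Set.Finite.mem_toFinset]
          exact ⟨by simpa using ha, by simpa using hb⟩
        obtain ⟨T, hsub, hTcard⟩ := Finset.exists_subset_card_eq (hsep _ hsepAB)
        exact ⟨T, by intro v hv; simpa using hsub hv, hTcard⟩
      · obtain ⟨T, hsub, hTcard⟩ := (Set.Infinite.exists_subset_card_eq hfin k)
        exact ⟨T, hsub, hTcard⟩
    obtain ⟨T, hsub, hTcard⟩ := hT
    let e : Fin k → W := fun i => (T.equivFin.symm (Fin.cast hTcard.symm i)).val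
    have he : Function.Injective e := by
      intro i j hij
      have := Subtype.val_injective hij
      have h2 := T.equivFin.symm.injective this
      exact Fin.val_injective (by simpa using congrArg Fin.val h2)
    have heT : ∀ i, e i ∈ A ∩ B := fun i => hsub (T.equivFin.symm _).2
    refine ⟨fun i => [e i], fun i => ⟨⟨by simp, List.isChain_singleton _, ?_, ?_⟩, by simp⟩, ?_⟩
    · simpa using (heT i).1
    · simpa using (heT i).2
    · intro i j hij v hvi hvj
      simp only [List.mem_singleton] at hvi hvj
      exact hij (he (hvi ▸ hvj))
  | succ n ih =>
    intro E hcard A B k hsep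
    rcases E.eq_empty_or_nonempty with rfl | ⟨⟨x, y⟩, hxy⟩
    · exact ih ∅ (by simp) A B k hsep
    · set E' := E.erase (x, y) with hE'
      have hE'card : E'.card ≤ n := by
        have h1 := Finset.card_erase_of_mem hxy
        have h2 : 1 ≤ E.card := Finset.card_pos.mpr ⟨(x, y), hxy⟩
        rw [hE', h1]
        omega
      have hliftD : ∀ u v, (u, v) ∈ E' → (u, v) ∈ E :=
        fun u v h => Finset.erase_subset _ _ h
      by_cases hxyeq : x = y
      · -- loop edge: removing it changes nothing
        subst hxyeq
        have hsep' : ∀ S : Finset W, SepD (fun u v => (u, v) ∈ E') A B S → k ≤ S.card := by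
          intro S hS
          apply hsep
          rintro l ⟨hl, hc, ha, hb⟩
          obtain ⟨m, hm, hmc, hmn, hmh, hml, hmsub⟩ :=
            dedup_chain (fun u v => (u, v) ∈ E) l.length l le_rfl hl hc
          have hmc' : m.Chain' (fun u v => (u, v) ∈ E') := by
            refine (chain'_ne_of_nodup m hmn hmc).imp ?_
            rintro a b ⟨hab, hne⟩
            exact Finset.mem_erase.mpr ⟨by simp [Prod.ext_iff]; intro h1 h2; exact hne (h1.trans h2.symm), hab⟩
          obtain ⟨v, hvS, hvm⟩ := hS m ⟨hm, hmc', hmh ▸ ha, hml ▸ hb⟩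
          exact ⟨v, hvS, hmsub v hvm⟩
        obtain ⟨P, h1, h2⟩ := ih E' hE'card A B k hsep'
        exact ⟨P, fun i => ⟨Pth_mono hliftD (h1 i).1, (h1 i).2⟩, h2⟩
      · by_cases hcase : ∀ S : Finset W, SepD (fun u v => (u, v) ∈ E') A B S → k ≤ S.card
        · obtain ⟨P, h1, h2⟩ := ih E' hE'card A B k hcase
          exact ⟨P, fun i => ⟨Pth_mono hliftD (h1 i).1, (h1 i).2⟩, h2⟩
        · -- main case
          push_neg at hcase
          obtain ⟨S, hSsep, hSlt⟩ := hcase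
          have hdi : ∀ a b, (a, b) ∈ E → (a, b) ∈ E' ∨ (a = x ∧ b = y) := by
            intro a b h
            by_cases hab : (a, b) = (x, y)
            · exact Or.inr ⟨congrArg Prod.fst hab, congrArg Prod.snd hab⟩
            · exact Or.inl (Finset.mem_erase.mpr ⟨hab, h⟩)
          -- insert x S and insert y S are separators for E
          have hsx : SepD (fun u v => (u, v) ∈ E) A B (insert x S) := by
            rintro l ⟨hl, hc, ha, hb⟩
            rcases reach_or_avoid _ _ x y hdi l hl hc with havoid | ⟨p, hp, hpc, hph, hpl, hppre⟩
            · obtain ⟨v, hvS, hvl⟩ := hSsep l ⟨hl, havoid, ha, hb⟩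
              exact ⟨v, Finset.mem_insert_of_mem hvS, hvl⟩
            · exact ⟨x, Finset.mem_insert_self x S, hppre.subset (hpl ▸ p.getLast_mem hp)⟩
          have hsy : SepD (fun u v => (u, v) ∈ E) A B (insert y S) := by
            rintro l ⟨hl, hc, ha, hb⟩
            rcases reach_or_avoid_rev _ _ x y hdi l hl hc with havoid | ⟨p, hp, hpc, hph, hpl, hpsuf⟩
            · obtain ⟨v, hvS, hvl⟩ := hSsep l ⟨hl, havoid, ha, hb⟩
              exact ⟨v, Finset.mem_insert_of_mem hvS, hvl⟩
            · exact ⟨y, Finset.mem_insert_self y S, hpsuf.subset (hph ▸ p.head_mem hp)⟩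
          have hxS : x ∉ S := by
            intro hx
            have h1 := hsep _ hsx
            rw [Finset.insert_eq_self.mpr hx] at h1
            omega
          have hyS : y ∉ S := by
            intro hy
            have h1 := hsep _ hsy
            rw [Finset.insert_eq_self.mpr hy] at h1
            omega
          have hScard : S.card = k - 1 := by
            have h1 := hsep _ hsx
            rw [Finset.card_insert_of_notMem hxS] at h1
            omega
          have hk1 : 1 ≤ k := by omega
          have hcardxS : (insert x S).card = k := by
            rw [Finset.card_insert_of_notMem hxS]; omega
          have hcardyS : (insert y S).card = k := by
            rw [Finset.card_insert_of_notMem hyS]; omega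
          -- separator hypotheses for the two induction applications
          have hA : ∀ T : Finset W, SepD (fun u v => (u, v) ∈ E') A ↑(insert x S) T →
              k ≤ T.card := by
            intro T hT
            apply hsep
            rintro l ⟨hl, hc, ha, hb⟩
            rcases reach_or_avoid _ _ x y hdi l hl hc with havoid | ⟨p, hp, hpc, hph, hpl, hppre⟩
            · obtain ⟨v, hvS, hvl⟩ := hSsep l ⟨hl, havoid, ha, hb⟩
              obtain ⟨p, hp, hpc, hph, hpl, _, hppre⟩ :=
                prefix_to_set (fun u v => (u, v) ∈ E') (↑S) l hl havoid ⟨v, hvl, by simpa using hvS⟩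
              obtain ⟨w, hwT, hwp⟩ := hT p ⟨hp, hpc, hph ▸ ha, by
                simp only [Finset.coe_insert, Set.mem_insert_iff]
                exact Or.inr (by simpa using hpl)⟩
              exact ⟨w, hwT, hppre.subset hwp⟩
            · obtain ⟨w, hwT, hwp⟩ := hT p ⟨hp, hpc, hph ▸ ha, by
                simp only [Finset.coe_insert, Set.mem_insert_iff]
                exact Or.inl hpl⟩
              exact ⟨w, hwT, hppre.subset hwp⟩
          have hB : ∀ T : Finset W, SepD (fun u v => (u, v) ∈ E') ↑(insert y S) B T →
              k ≤ T.card := by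
            intro T hT
            apply hsep
            rintro l ⟨hl, hc, ha, hb⟩
            rcases reach_or_avoid_rev _ _ x y hdi l hl hc with havoid | ⟨p, hp, hpc, hph, hpl, hpsuf⟩
            · obtain ⟨v, hvS, hvl⟩ := hSsep l ⟨hl, havoid, ha, hb⟩
              obtain ⟨p, hp, hpc, hpl, hph, _, hpsuf⟩ :=
                suffix_from_set (fun u v => (u, v) ∈ E') (↑S) l hl havoid ⟨v, hvl, by simpa using hvS⟩
              obtain ⟨w, hwT, hwp⟩ := hT p ⟨hp, hpc, by
                simp only [Finset.coe_insert, Set.mem_insert_iff]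
                exact Or.inr (by simpa using hph), hpl ▸ hb⟩
              exact ⟨w, hwT, hpsuf.subset hwp⟩
            · obtain ⟨w, hwT, hwp⟩ := hT p ⟨hp, hpc, by
                simp only [Finset.coe_insert, Set.mem_insert_iff]
                exact Or.inl hph, hpl ▸ hb⟩
              exact ⟨w, hwT, hpsuf.subset hwp⟩
          obtain ⟨Qa, hQa1, hQa2⟩ := ih E' hE'card A ↑(insert x S) k hA
          obtain ⟨Qb, hQb1, hQb2⟩ := ih E' hE'card ↑(insert y S) B k hB
          -- truncate the A-side paths at their first vertex of insert x S
          have htrA : ∀ i, ∃ p, ∃ hp : p ≠ [], p.Chain' (fun u v => (u, v) ∈ E') ∧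
              p.head hp ∈ A ∧ p.getLast hp ∈ (↑(insert x S) : Set W) ∧
              (∀ z ∈ p, z ∈ (↑(insert x S) : Set W) → z = p.getLast hp) ∧
              p.Nodup ∧ ∀ z ∈ p, z ∈ Qa i := by
            intro i
            obtain ⟨⟨hne, hch, hha, hhb⟩, hnd⟩ := hQa1 i
            obtain ⟨p, hp, h1, h2, h3, h4, h5⟩ :=
              prefix_to_set (fun u v => (u, v) ∈ E') (↑(insert x S)) (Qa i) hne hch
                ⟨_, (Qa i).getLast_mem hne, hhb⟩
            exact ⟨p, hp, h1, h2 ▸ hha, h3, h4, h5.sublist.nodup hnd, fun z hz => h5.subset hz⟩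
          have htrB : ∀ i, ∃ p, ∃ hp : p ≠ [], p.Chain' (fun u v => (u, v) ∈ E') ∧
              p.getLast hp ∈ B ∧ p.head hp ∈ (↑(insert y S) : Set W) ∧
              (∀ z ∈ p, z ∈ (↑(insert y S) : Set W) → z = p.head hp) ∧
              p.Nodup ∧ ∀ z ∈ p, z ∈ Qb i := by
            intro i
            obtain ⟨⟨hne, hch, hha, hhb⟩, hnd⟩ := hQb1 i
            obtain ⟨p, hp, h1, h2, h3, h4, h5⟩ :=
              suffix_from_set (fun u v => (u, v) ∈ E') (↑(insert y S)) (Qb i) hne hch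
                ⟨_, (Qb i).head_mem hne, hha⟩
            exact ⟨p, hp, h1, h2 ▸ hhb, h3, h4, h5.sublist.nodup hnd, fun z hz => h5.subset hz⟩
          choose Pa hPane hPac hPaA hPal hPaonly hPand hPasub using htrA
          choose Pb hPbne hPbc hPbB hPbh hPbonly hPbnd hPbsub using htrB
          set f : Fin k → W := fun i => (Pa i).getLast (hPane i) with hf
          set g : Fin k → W := fun i => (Pb i).head (hPbne i) with hg
          have hfmem : ∀ i, f i ∈ insert x S := fun i => by
            have := hPal i; simpa using this
          have hgmem : ∀ i, g i ∈ insert y S := fun i => by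
            have := hPbh i; simpa using this
          have hfinj : Function.Injective f := by
            intro i i' h
            by_contra hne
            exact hQa2 i i' hne (f i) (hPasub i _ ((Pa i).getLast_mem _))
              (h ▸ hPasub i' _ ((Pa i').getLast_mem _))
          have hginj : Function.Injective g := by
            intro i i' h
            by_contra hne
            exact hQb2 i i' hne (g i) (hPbsub i _ ((Pb i).head_mem _))
              (h ▸ hPbsub i' _ ((Pb i').head_mem _))
          have hgsurj : ∀ w ∈ insert y S, ∃ i, g i = w := by
            have himg : Finset.image g Finset.univ = insert y S := by
              apply Finset.eq_of_subset_of_card_le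
              · intro w hw
                obtain ⟨i, _, rfl⟩ := Finset.mem_image.mp hw
                exact hgmem i
              · rw [hcardyS, Finset.card_image_of_injective _ hginj]
                simp
            intro w hw
            obtain ⟨i, _, hiw⟩ := Finset.mem_image.mp (himg ▸ hw)
            exact ⟨i, hiw⟩
          have hτmem : ∀ i, (if f i = x then y else f i) ∈ insert y S := by
            intro i
            by_cases hfx : f i = x
            · simp [hfx]
            · rcases Finset.mem_insert.mp (hfmem i) with h | h
              · exact absurd h hfx
              · simp [hfx, Finset.mem_insert_of_mem h]
          have hjex : ∀ i, ∃ j, g j = (if f i = x then y else f i) :=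
            fun i => hgsurj _ (hτmem i)
          choose jmap hgj using hjex
          have hτinj : ∀ i i', (if f i = x then y else f i) = (if f i' = x then y else f i') → i = i' := by
            intro i i' h
            by_cases h1 : f i = x <;> by_cases h2 : f i' = x
            · exact hfinj (h1.trans h2.symm)
            · rw [if_pos h1, if_neg h2] at h
              rcases Finset.mem_insert.mp (hfmem i') with h3 | h3
              · exact absurd h3 h2
              · exact absurd (h ▸ h3) hyS
            · rw [if_neg h1, if_pos h2] at h
              rcases Finset.mem_insert.mp (hfmem i) with h3 | h3
              · exact absurd h3 h1
              · exact absurd (h.symm ▸ h3) hyS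
            · rw [if_neg h1, if_neg h2] at h
              exact hfinj h
          have hjinj : Function.Injective jmap := by
            intro i i' h
            exact hτinj i i' ((hgj i).symm.trans (h ▸ hgj i'))
          have hcross : ∀ i i' z, z ∈ Pa i → z ∈ Pb i' → z ∈ S := by
            intro i i' z hz1 hz2
            by_contra hzS
            exact no_cross (fun u v => (u, v) ∈ E') A B S hSsep (Pa i) (Pb i')
              (hPane i) (hPbne i') (hPand i) (hPbnd i') (hPac i) (hPbc i')
              (hPaA i) (hPbB i')
              (fun w hw hwS => hPaonly i w hw (by simp [hwS]))
              (fun w hw hwS => hPbonly i' w hw (by simp [hwS]))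
              z hz1 hz2 hzS
          have hCex : ∀ i, ∃ c, ∃ hc : c ≠ [], c.Chain' (fun u v => (u, v) ∈ E) ∧
              c.head hc ∈ A ∧ c.getLast hc ∈ B ∧
              (∀ v ∈ c, v ∈ Pa i ∨ v ∈ Pb (jmap i)) ∧ c.Nodup := by
            intro i
            have hcaE : (Pa i).Chain' (fun u v => (u, v) ∈ E) := (hPac i).imp hliftD
            have hcbE : (Pb (jmap i)).Chain' (fun u v => (u, v) ∈ E) := (hPbc (jmap i)).imp hliftD
            by_cases hfx : f i = x
            · have hgy : g (jmap i) = y := (hgj i).trans (if_pos hfx)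
              obtain ⟨c, hc, h1, h2, h3, h4, h5⟩ :=
                glue_path_edge (fun u v => (u, v) ∈ E) (Pa i) (Pb (jmap i))
                  (hPane i) (hPbne _) hcaE hcbE (by
                    show ((Pa i).getLast _, (Pb (jmap i)).head _) ∈ E
                    have e1 : (Pa i).getLast (hPane i) = x := hfx
                    have e2 : (Pb (jmap i)).head (hPbne _) = y := hgy
                    rw [e1, e2]; exact hxy)
              refine ⟨c, hc, h1, h2.symm ▸ hPaA i, h3.symm ▸ hPbB _, h4, h5 (hPand i) (hPbnd _) ?_⟩
              intro v hv1 hv2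
              have hvS := hcross i (jmap i) v hv1 hv2
              have hveq : v = f i :=
                hPaonly i v hv1 (by simp [hvS])
              exact absurd ((hveq.trans hfx) ▸ hvS) hxS
            · have hfiS : f i ∈ S := by
                rcases Finset.mem_insert.mp (hfmem i) with h | h
                · exact absurd h hfx
                · exact h
              have hgfi : g (jmap i) = f i := (hgj i).trans (if_neg hfx)
              obtain ⟨c, hc, h1, h2, h3, h4, h5⟩ :=
                glue_path_eq (fun u v => (u, v) ∈ E) (Pa i) (Pb (jmap i))
                  (hPane i) (hPbne _) hcaE hcbE hgfi.symm
              refine ⟨c, hc, h1, h2.symm ▸ hPaA i, h3.symm ▸ hPbB _, h4, h5 (hPand i) (hPbnd _) ?_⟩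
              intro v hv1 hv2
              have hvS := hcross i (jmap i) v hv1 hv2
              have hveq : v = f i :=
                hPaonly i v hv1 (by simp [hvS])
              exact hveq.trans hgfi.symm
          choose C hCne hCc hCA hCB hCmem hCnd using hCex
          refine ⟨C, fun i => ⟨⟨hCne i, hCc i, hCA i, hCB i⟩, hCnd i⟩, ?_⟩
          intro i i' hne v hv1 hv2
          rcases hCmem i v hv1 with ha1 | hb1 <;> rcases hCmem i' v hv2 with ha2 | hb2
          · exact hQa2 i i' hne v (hPasub i v ha1) (hPasub i' v ha2)
          · -- v ∈ Pa i and v ∈ Pb (jmap i')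
            have hvS := hcross i (jmap i') v ha1 hb2
            have h1 : v = f i := hPaonly i v ha1 (by simp [hvS])
            have h2 : v = (if f i' = x then y else f i') :=
              (hPbonly (jmap i') v hb2 (by simp [hvS])).trans (hgj i')
            by_cases hfx' : f i' = x
            · rw [if_pos hfx'] at h2
              exact absurd (h2 ▸ hvS) hyS
            · rw [if_neg hfx'] at h2
              exact hne (hfinj (h1.symm.trans h2))
          · -- v ∈ Pb (jmap i) and v ∈ Pa i'
            have hvS := hcross i' (jmap i) v ha2 hb1
            have h1 : v = f i' := hPaonly i' v ha2 (by simp [hvS])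
            have h2 : v = (if f i = x then y else f i) :=
              (hPbonly (jmap i) v hb1 (by simp [hvS])).trans (hgj i)
            by_cases hfx : f i = x
            · rw [if_pos hfx] at h2
              exact absurd (h2 ▸ hvS) hyS
            · rw [if_neg hfx] at h2
              exact hne (hfinj (h2.symm.trans h1))
          · exact hQb2 _ _ (fun h => hne (hjinj h)) v (hPbsub _ v hb1) (hPbsub _ v hb2)


lemma chain'_iff_zip (R : W → W → Prop) :
    ∀ l : List W, l.Chain' R ↔ ∀ p ∈ l.zip l.tail, R p.1 p.2 := by
  intro l
  induction l with
  | nil => simp [List.Chain']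
  | cons a t ih =>
    cases t with
    | nil => simp [List.Chain']
    | cons b t' =>
      constructor
      · intro hc p hp
        rcases List.mem_cons.mp hp with rfl | hp
        · exact (List.isChain_cons_cons.mp hc).1
        · exact (ih.mp (List.isChain_cons_cons.mp hc).2) p hp
      · intro h
        refine List.isChain_cons_cons.mpr ⟨h (a, b) (List.mem_cons_self), ih.mpr ?_⟩
        intro p hp
        exact h p (List.mem_cons_of_mem _ hp)

/-- Menger for arbitrary (possibly infinite) vertex sets, via compactness. -/
theorem infMenger (D : W → W → Prop) (A B : Set W) (k : ℕ)
    (hsep : ∀ S : Finset W, SepD D A B S → k ≤ S.card) :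
    ∃ P : Fin k → List W, (∀ i, Pth D A B (P i) ∧ (P i).Nodup) ∧
      (∀ i j, i ≠ j → ∀ v, v ∈ P i → v ∉ P j) := by
  classical
  set α := {p : W × W // D p.1 p.2} with hα
  have key : ∃ F : Finset α,
      ∀ S : Finset W, SepD (fun u v => (u, v) ∈ F.image Subtype.val) A B S → k ≤ S.card := by
    by_contra hcon
    push_neg at hcon
    choose Sf hSf hSflt using hcon
    haveI : Filter.NeBot (Filter.atTop : Filter (Finset α)) := by infer_instance
    set U := Ultrafilter.of (Filter.atTop : Filter (Finset α)) with hU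
    have hUat : ∀ s : Set (Finset α), s ∈ Filter.atTop → s ∈ U :=
      fun s hs => Ultrafilter.of_le _ hs
    set T : Set W := {v | {F : Finset α | v ∈ Sf F} ∈ U} with hT
    have hbound : ∀ t : Finset W, ↑t ⊆ T → t.card < k := by
      intro t ht
      by_contra hge
      push_neg at hge
      have hint : (⋂ v ∈ (↑t : Set W), {F : Finset α | v ∈ Sf F}) ∈ U :=
        (Filter.biInter_mem t.finite_toSet).mpr (fun v hv => ht hv)
      obtain ⟨F, hF⟩ := Ultrafilter.nonempty_of_mem hint
      simp only [Set.mem_iInter, Set.mem_setOf_eq] at hF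
      have hsub : t ⊆ Sf F := fun v hv => hF v (by simpa using hv)
      have := Finset.card_le_card hsub
      have := hSflt F
      omega
    have hTfin : T.Finite := by
      by_contra hinf
      obtain ⟨t, hsub, hcard⟩ := Set.Infinite.exists_subset_card_eq hinf k
      have := hbound t hsub
      omega
    have hTsep : SepD D A B hTfin.toFinset := by
      rintro l ⟨hl, hc, ha, hb⟩
      have hzip : ∀ p ∈ l.zip l.tail, D p.1 p.2 := (chain'_iff_zip D l).mp hc
      set F₀ : Finset α :=
        ((l.zip l.tail).attach.map
          (fun p => (⟨p.val, hzip p.val p.2⟩ : α))).toFinset with hF₀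
      have hup : {F : Finset α | F₀ ≤ F} ⊆
          ⋃ v ∈ (↑l.toFinset : Set W), {F : Finset α | v ∈ Sf F} := by
        intro F hF
        have hcF : l.Chain' (fun u v => (u, v) ∈ F.image Subtype.val) := by
          refine (chain'_iff_zip _ l).mpr ?_
          intro p hp
          refine Finset.mem_image.mpr ⟨⟨p, hzip p hp⟩, ?_, rfl⟩
          apply hF
          simp only [hF₀, List.mem_toFinset, List.mem_map]
          exact ⟨⟨p, hp⟩, List.mem_attach _ _, rfl⟩
        obtain ⟨v, hvS, hvl⟩ := hSf F l ⟨hl, hcF, ha, hb⟩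
        exact Set.mem_biUnion (by simpa using hvl) hvS
      have hmem : (⋃ v ∈ (↑l.toFinset : Set W), {F : Finset α | v ∈ Sf F}) ∈ U :=
        Filter.mem_of_superset (hUat _ (Filter.mem_atTop F₀)) hup
      obtain ⟨v, hvl, hvU⟩ :=
        (Ultrafilter.finite_biUnion_mem_iff l.toFinset.finite_toSet).mp hmem
      exact ⟨v, by simpa [hT] using hvU, by simpa using hvl⟩
    have h1 := hsep _ hTsep
    have h2 := hbound hTfin.toFinset (by simp)
    omega
  obtain ⟨F, hF⟩ := key
  obtain ⟨P, h1, h2⟩ := finMenger (F.image Subtype.val).card (F.image Subtype.val) le_rfl A B k hF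
  refine ⟨P, fun i => ⟨Pth_mono ?_ (h1 i).1, (h1 i).2⟩, h2⟩
  intro u v huv
  obtain ⟨⟨p, hp⟩, _, heq⟩ := Finset.mem_image.mp huv
  have : p = (u, v) := heq
  subst this
  exact hp

end MengerAux

namespace TrekMenger
open MengerAux

variable {V : Type}

/-- The doubled graph on `V ⊕ V`: left copies carry reversed arrows,
right copies carry forward arrows, and crossings go from a left top to a
right top (equal vertices or a bidirected arrow). -/
def D2 (G : MixedGraph V) : (V ⊕ V) → (V ⊕ V) → Prop
  | Sum.inl u, Sum.inl v => G.dir v u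
  | Sum.inl u, Sum.inr v => u = v ∨ G.bi u v
  | Sum.inr u, Sum.inr v => G.dir u v
  | Sum.inr _, Sum.inl _ => False

variable {G : MixedGraph V}

/-- The path in the doubled graph associated with a trek. -/
def trekPath (t : Trek G) : List (V ⊕ V) :=
  (t.left.reverse.map Sum.inl) ++ (t.right.map Sum.inr)

lemma trekPath_ne (t : Trek G) : trekPath t ≠ [] := by
  simp [trekPath, t.right_ne]

lemma trekPath_chain (t : Trek G) : (trekPath t).Chain' (D2 G) := by
  rw [trekPath, List.Chain', List.isChain_append]
  refine ⟨?_, ?_, ?_⟩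
  · rw [List.isChain_map]
    rw [List.isChain_reverse]
    exact t.left_chain.imp (fun a b h => h)
  · rw [List.isChain_map]
    exact t.right_chain.imp (fun a b h => h)
  · intro p hp q hq
    have hne1 : (t.left.reverse.map (Sum.inl : V → V ⊕ V)) ≠ [] := by simp [t.left_ne]
    have hne2 : (t.right.map (Sum.inr : V → V ⊕ V)) ≠ [] := by simp [t.right_ne]
    rw [List.getLast?_eq_getLast hne1] at hp
    rw [List.head?_eq_head hne2] at hq
    simp only [Option.mem_def, Option.some.injEq] at hp hq
    rw [← hp, ← hq]
    rw [List.getLast_map, List.head_map, List.getLast_reverse]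
    exact t.top_ok

lemma trekPath_head (t : Trek G) :
    (trekPath t).head (trekPath_ne t) = Sum.inl t.src := by
  have hne1 : (t.left.reverse.map (Sum.inl : V → V ⊕ V)) ≠ [] := by simp [t.left_ne]
  exact (List.head_append_left hne1).trans
    (by rw [List.head_map, List.head_reverse]; rfl)

lemma trekPath_getLast (t : Trek G) :
    (trekPath t).getLast (trekPath_ne t) = Sum.inr t.dst := by
  have hne2 : (t.right.map (Sum.inr : V → V ⊕ V)) ≠ [] := by simp [t.right_ne]
  exact (getLast_append_right hne2 _).trans
    (by rw [List.getLast_map]; rfl)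

lemma trekPath_mem_inl (t : Trek G) (v : V) :
    Sum.inl v ∈ trekPath t ↔ t.onLeft v := by
  rw [trekPath, List.mem_append]
  constructor
  · rintro (h | h)
    · rw [List.mem_map_of_injective Sum.inl_injective] at h
      exact List.mem_reverse.mp h
    · exfalso
      obtain ⟨w, _, hw⟩ := List.mem_map.mp h
      exact Sum.inr_ne_inl hw
  · intro h
    exact Or.inl (by rw [List.mem_map_of_injective Sum.inl_injective, List.mem_reverse]; exact h)

lemma trekPath_mem_inr (t : Trek G) (v : V) :
    Sum.inr v ∈ trekPath t ↔ t.onRight v := by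
  rw [trekPath, List.mem_append]
  constructor
  · rintro (h | h)
    · exfalso
      obtain ⟨w, _, hw⟩ := List.mem_map.mp h
      exact Sum.inl_ne_inr hw
    · rw [List.mem_map_of_injective Sum.inr_injective] at h
      exact h
  · intro h
    exact Or.inr (by rw [List.mem_map_of_injective Sum.inr_injective]; exact h)

lemma all_inr : ∀ (t : List (V ⊕ V)) (b : V),
    (Sum.inr b :: t).Chain' (D2 G) → ∀ z ∈ t, ∃ c, z = Sum.inr c := by
  intro t
  induction t with
  | nil => intro b _ z hz; simp at hz
  | cons z t' ih =>
    intro b hc w hw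
    have hd : D2 G (Sum.inr b) z := (List.isChain_cons_cons.mp hc).1
    obtain ⟨c, rfl⟩ : ∃ c, z = Sum.inr c := by
      cases z with
      | inl a => exact absurd hd (fun h => h)
      | inr c => exact ⟨c, rfl⟩
    rcases List.mem_cons.mp hw with rfl | hw
    · exact ⟨c, rfl⟩
    · exact ih c (List.isChain_cons_cons.mp hc).2 w hw

lemma map_of_all : ∀ t : List (V ⊕ V), (∀ z ∈ t, ∃ c, z = Sum.inr c) →
    ∃ t₂ : List V, t = t₂.map Sum.inr := by
  intro t
  induction t with
  | nil => intro _; exact ⟨[], rfl⟩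
  | cons z t' ih =>
    intro h
    obtain ⟨c, rfl⟩ := h z (List.mem_cons_self)
    obtain ⟨t₂, rfl⟩ := ih (fun w hw => h w (List.mem_cons_of_mem _ hw))
    exact ⟨c :: t₂, rfl⟩

lemma decomp : ∀ (l : List (V ⊕ V)) (hl : l ≠ []), l.Chain' (D2 G) →
    (∃ a, l.head hl = Sum.inl a) → (∃ b, l.getLast hl = Sum.inr b) →
    ∃ (l₁ l₂ : List V), l₁ ≠ [] ∧ l₂ ≠ [] ∧ l = l₁.map Sum.inl ++ l₂.map Sum.inr := by
  intro l
  induction l with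
  | nil => intro hl; exact absurd rfl hl
  | cons x t ih =>
    intro hl hc hhead hlast
    obtain ⟨a, ha⟩ := hhead
    have hx : x = Sum.inl a := ha
    subst hx
    cases t with
    | nil =>
      obtain ⟨b, hb⟩ := hlast
      exact absurd (show Sum.inl a = Sum.inr b from hb) (by simp)
    | cons y t' =>
      cases y with
      | inl a' =>
        obtain ⟨l₁, l₂, h1, h2, h3⟩ := ih (by simp) (List.isChain_cons_cons.mp hc).2
          ⟨a', rfl⟩ (by
            obtain ⟨b, hb⟩ := hlast
            exact ⟨b, (List.getLast_cons (by simp)).symm.trans hb⟩)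
        exact ⟨a :: l₁, l₂, by simp, h2, by rw [List.map_cons, List.cons_append, ← h3]⟩
      | inr b' =>
        obtain ⟨t₂, rfl⟩ := map_of_all t' (all_inr t' b' (List.isChain_cons_cons.mp hc).2)
        exact ⟨[a], b' :: t₂, by simp, by simp, by simp⟩

lemma trek_of_path (A B : Set V) (l : List (V ⊕ V))
    (hp : Pth (D2 G) (Sum.inl '' A) (Sum.inr '' B) l) :
    ∃ t : Trek G, t.src ∈ A ∧ t.dst ∈ B ∧
      (∀ v, t.onLeft v → Sum.inl v ∈ l) ∧ (∀ v, t.onRight v → Sum.inr v ∈ l) := by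
  obtain ⟨hl, hc, ha, hb⟩ := hp
  obtain ⟨a, haA, hha⟩ := ha
  obtain ⟨b, hbB, hbb⟩ := hb
  obtain ⟨l₁, l₂, hne1, hne2, rfl⟩ := decomp l hl hc ⟨a, hha.symm⟩ ⟨b, hbb.symm⟩
  have hne1' : (l₁.map (Sum.inl : V → V ⊕ V)) ≠ [] := by simp [hne1]
  have hne2' : (l₂.map (Sum.inr : V → V ⊕ V)) ≠ [] := by simp [hne2]
  obtain ⟨c1, c2, c3⟩ := List.isChain_append.mp hc
  have hleft_chain : l₁.reverse.Chain' G.dir := by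
    rw [List.Chain', List.isChain_reverse]
    exact ((List.isChain_map _).mp c1).imp (fun u v h => h)
  have hright_chain : l₂.Chain' G.dir :=
    ((List.isChain_map _).mp c2).imp (fun u v h => h)
  have hjoin : D2 G (Sum.inl (l₁.getLast hne1)) (Sum.inr (l₂.head hne2)) := by
    apply c3
    · rw [List.getLast?_eq_getLast hne1', List.getLast_map]
      rfl
    · rw [List.head?_eq_head hne2', List.head_map]
      rfl
  have hlne : l₁.reverse ≠ [] := by simp [hne1]
  refine ⟨⟨l₁.reverse, l₂, hlne, hne2, hleft_chain, hright_chain, ?_⟩, ?_, ?_, ?_, ?_⟩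
  · rw [List.head_reverse]
    exact hjoin
  · show (l₁.reverse).getLast hlne ∈ A
    rw [List.getLast_reverse]
    have : Sum.inl a = (Sum.inl (l₁.head hne1) : V ⊕ V) := by
      rw [hha, List.head_append_left hne1', List.head_map]
    have ha2 : a = l₁.head hne1 := Sum.inl_injective this
    exact ha2 ▸ haA
  · show l₂.getLast hne2 ∈ B
    have : Sum.inr b = (Sum.inr (l₂.getLast hne2) : V ⊕ V) := by
      rw [hbb, getLast_append_right hne2', List.getLast_map]
    have hb2 : b = l₂.getLast hne2 := Sum.inr_injective this
    exact hb2 ▸ hbB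
  · intro v hv
    have hv1 : v ∈ l₁ := List.mem_reverse.mp hv
    exact List.mem_append_left _ (List.mem_map_of_injective Sum.inl_injective |>.mpr hv1)
  · intro v hv
    exact List.mem_append_right _ (List.mem_map_of_injective Sum.inr_injective |>.mpr hv)

end TrekMenger

/-- Menger-type statement for treks.  If every t-separator of
`A` and `B` has size at least `k`, then there are `k` treks from `A` to `B`,
no two of which have a same-sided intersection (in particular their left
endpoints are `k` distinct vertices of `A` and their right endpoints are `k`
distinct vertices of `B`). -/
theorem treks_exist_of_min_separator_size
    {V : Type} (G : MixedGraph V) (hG : G.Acyclic) (A B : Set V)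
    (k : ℕ) (hk : 1 ≤ k)
    (hsep : ∀ L R : Finset V, TSep G L R A B → k ≤ L.card + R.card) :
    ∃ π : Fin k → Trek G,
      (∀ a : Fin k, (π a).src ∈ A ∧ (π a).dst ∈ B) ∧
      (∀ a b : Fin k, a ≠ b → ¬ Trek.SameSided (π a) (π b)) ∧
      Function.Injective (fun a : Fin k => (π a).src) ∧
      Function.Injective (fun a : Fin k => (π a).dst) := by
  classical
  have hsep₂ : ∀ S : Finset (V ⊕ V),
      MengerAux.SepD (TrekMenger.D2 G) (Sum.inl '' A) (Sum.inr '' B) S → k ≤ S.card := by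
    intro S hS
    have hinjl : Set.InjOn (Sum.inl : V → V ⊕ V) (Sum.inl ⁻¹' (↑S : Set (V ⊕ V))) := Sum.inl_injective.injOn
    have hinjr : Set.InjOn (Sum.inr : V → V ⊕ V) (Sum.inr ⁻¹' (↑S : Set (V ⊕ V))) := Sum.inr_injective.injOn
    set L := S.preimage Sum.inl hinjl with hL
    set R := S.preimage Sum.inr hinjr with hR
    have hts : TSep G L R A B := by
      intro t hsrc hdst
      obtain ⟨w, hwS, hwl⟩ := hS (TrekMenger.trekPath t)
        ⟨TrekMenger.trekPath_ne t, TrekMenger.trekPath_chain t,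
          by rw [TrekMenger.trekPath_head]; exact ⟨t.src, hsrc, rfl⟩,
          by rw [TrekMenger.trekPath_getLast]; exact ⟨t.dst, hdst, rfl⟩⟩
      cases w with
      | inl v => exact Or.inl ⟨v, Finset.mem_preimage.mpr hwS,
          (TrekMenger.trekPath_mem_inl t v).mp hwl⟩
      | inr v => exact Or.inr ⟨v, Finset.mem_preimage.mpr hwS,
          (TrekMenger.trekPath_mem_inr t v).mp hwl⟩
    have hk' := hsep L R hts
    have hsub : L.image Sum.inl ∪ R.image Sum.inr ⊆ S := by
      intro w hw
      rcases Finset.mem_union.mp hw with h | h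
      · obtain ⟨v, hv, rfl⟩ := Finset.mem_image.mp h
        exact Finset.mem_preimage.mp hv
      · obtain ⟨v, hv, rfl⟩ := Finset.mem_image.mp h
        exact Finset.mem_preimage.mp hv
    have hdisj : Disjoint (L.image Sum.inl) (R.image Sum.inr) := by
      rw [Finset.disjoint_left]
      intro w h1 h2
      obtain ⟨v, _, rfl⟩ := Finset.mem_image.mp h1
      obtain ⟨v', _, hv'⟩ := Finset.mem_image.mp h2
      exact absurd hv' (by simp)
    calc k ≤ L.card + R.card := hk'
      _ = (L.image Sum.inl).card + (R.image Sum.inr).card := by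
          rw [Finset.card_image_of_injective _ Sum.inl_injective,
            Finset.card_image_of_injective _ Sum.inr_injective]
      _ = (L.image Sum.inl ∪ R.image Sum.inr).card :=
          (Finset.card_union_of_disjoint hdisj).symm
      _ ≤ S.card := Finset.card_le_card hsub
  obtain ⟨P, h1, h2⟩ :=
    MengerAux.infMenger (TrekMenger.D2 G) (Sum.inl '' A) (Sum.inr '' B) k hsep₂
  have hex : ∀ i : Fin k, ∃ t : Trek G, t.src ∈ A ∧ t.dst ∈ B ∧
      (∀ v, t.onLeft v → Sum.inl v ∈ P i) ∧ (∀ v, t.onRight v → Sum.inr v ∈ P i) :=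
    fun i => TrekMenger.trek_of_path A B (P i) (h1 i).1
  choose π hsrc hdst hmeml hmemr using hex
  have hsrcmem : ∀ i, (π i).onLeft (π i).src := fun i => (π i).left.getLast_mem _
  have hdstmem : ∀ i, (π i).onRight (π i).dst := fun i => (π i).right.getLast_mem _
  refine ⟨π, fun i => ⟨hsrc i, hdst i⟩, ?_, ?_, ?_⟩
  · rintro a b hab ⟨v, ⟨hv1, hv2⟩ | ⟨hv1, hv2⟩⟩
    · exact h2 a b hab _ (hmeml a v hv1) (hmeml b v hv2)
    · exact h2 a b hab _ (hmemr a v hv1) (hmemr b v hv2)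
  · intro a b heq
    by_contra hab
    have heq' : (π a).src = (π b).src := heq
    refine h2 a b hab _ (hmeml a _ (hsrcmem a)) (hmeml b _ ?_)
    rw [heq']
    exact hsrcmem b
  · intro a b heq
    by_contra hab
    have heq' : (π a).dst = (π b).dst := heq
    refine h2 a b hab _ (hmemr a _ (hdstmem a)) (hmemr b _ ?_)
    rw [heq']
    exact hdstmem b
end

section
/- Let G be a directed acyclic graph on V = Fin n, let y ∈ V, let X ⊆ Pa_G(y), and let i ∈ V. If there is no trek from i to y in the graph G_{X̄} obtained from G by deleting all arrows from a vertex of X to y, then for every matrix Λ supported on the arrows of G and every diagonal matrix Φ with positive diagonal entries, the covariance of variable i with the composite error of the equation of y vanishes: Σ_{p ∈ Pa_G(y) \ X} Λ[p,y]·Σ[i,p] + ((I − Λ)⁻ᵀΦ)[i,y] = 0, where Σ = (I − Λ)⁻ᵀ Φ (I − Λ)⁻¹. -/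
open Classical Matrix

/-- A trek in a directed graph given by the arrow relation `E`: a pair of
directed paths (nonempty lists of vertices) from a common top vertex. -/
structure DTrek {n : ℕ} (E : Fin n → Fin n → Prop) where
  left : List (Fin n)
  right : List (Fin n)
  left_ne : left ≠ []
  right_ne : right ≠ []
  left_chain : left.Chain' E
  right_chain : right.Chain' E
  top_eq : left.head left_ne = right.head right_ne

namespace DTrek

variable {n : ℕ} {E : Fin n → Fin n → Prop}

/-- The top of a trek. -/
def top (t : DTrek E) : Fin n := t.left.head t.left_ne

/-- The left endpoint of a trek. -/
def src (t : DTrek E) : Fin n := t.left.getLast t.left_ne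

/-- The right endpoint of a trek. -/
def dst (t : DTrek E) : Fin n := t.right.getLast t.right_ne

end DTrek

/-- `(L, R)` t-separates the vertex sets `A` and `B` in the directed graph `E`:
every trek from `A` to `B` has a vertex of `L` on its left side or a vertex of
`R` on its right side. -/
def DTSep {n : ℕ} (E : Fin n → Fin n → Prop) (L R : Finset (Fin n))
    (A B : Set (Fin n)) : Prop :=
  ∀ t : DTrek E, t.src ∈ A → t.dst ∈ B →
    (∃ v ∈ L, v ∈ t.left) ∨ (∃ v ∈ R, v ∈ t.right)

/-- The directed graph `E` is acyclic. -/
def EAcyclic {n : ℕ} (E : Fin n → Fin n → Prop) : Prop :=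
  ∀ v, ¬ Relation.TransGen E v v

/-- `Λ` is supported on the arrows of `E`. -/
def SupportedOn {n : ℕ} (E : Fin n → Fin n → Prop)
    (Λ : Matrix (Fin n) (Fin n) ℝ) : Prop :=
  ∀ u v, ¬ E u v → Λ u v = 0

/-- The implied covariance matrix `Σ = (I − Λ)⁻ᵀ Φ (I − Λ)⁻¹` of an SEM. -/
noncomputable def impliedCov {n : ℕ} (Λ Φ : Matrix (Fin n) (Fin n) ℝ) :
    Matrix (Fin n) (Fin n) ℝ :=
  ((1 - Λ)⁻¹)ᵀ * Φ * (1 - Λ)⁻¹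

/-- The covariance of variable `i` with the composite error
`ε = Σ_{p ∈ Pa(y)\X} Λ[p,y]·x_p + ε_y` of the equation of `y`:
`Σ_{p ∈ Pa(y)\X} Λ[p,y]·Σ[i,p] + ((I − Λ)⁻ᵀΦ)[i,y]`. -/
noncomputable def errorCov {n : ℕ} (E : Fin n → Fin n → Prop)
    (Λ Φ : Matrix (Fin n) (Fin n) ℝ) (y : Fin n) (X : Finset (Fin n))
    (i : Fin n) : ℝ :=
  (∑ p ∈ Finset.univ.filter (fun p => E p y ∧ p ∉ X),
      Λ p y * impliedCov Λ Φ i p)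
    + ((((1 - Λ)⁻¹)ᵀ * Φ : Matrix (Fin n) (Fin n) ℝ)) i y

private lemma chain'_transGen {α : Type*} {R : α → α → Prop} {l : List α} (h : l.Chain' R) :
    ∀ {i j : ℕ}, (hij : i < j) → (hj : j < l.length) →
      Relation.TransGen R (l.get ⟨i, by omega⟩) (l.get ⟨j, hj⟩) := by
  intro i j hij
  induction j with
  | zero => omega
  | succ j ih =>
    intro hj
    have hr := List.isChain_iff_getElem.mp h j (by omega)
    rcases Nat.lt_or_ge i j with h' | h'
    · exact (ih h' (by omega)).tail hr
    · have : i = j := by omega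
      subst this; exact .single hr

private lemma pow_path {n : ℕ} {Λ : Matrix (Fin n) (Fin n) ℝ} :
    ∀ {k : ℕ} {u v : Fin n}, (Λ ^ k) u v ≠ 0 →
      ∃ l : List (Fin n), ∃ hl : l ≠ [], l.length = k + 1 ∧
        l.Chain' (fun a b => Λ a b ≠ 0) ∧ l.head hl = u ∧ l.getLast hl = v := by
  intro k
  induction k with
  | zero =>
    intro u v h
    have huv : u = v := by
      by_contra hne
      simp [pow_zero, Matrix.one_apply_ne hne] at h
    exact ⟨[u], by simp, by simp, List.isChain_singleton _, rfl, by simpa using huv⟩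
  | succ k ih =>
    intro u v h
    rw [pow_succ', Matrix.mul_apply] at h
    obtain ⟨w, -, hw⟩ := Finset.exists_ne_zero_of_sum_ne_zero h
    have hΛ : Λ u w ≠ 0 := fun e => hw (by rw [e, zero_mul])
    have hp : (Λ ^ k) w v ≠ 0 := fun e => hw (by rw [e, mul_zero])
    obtain ⟨l, hl, hlen, hc, hh, hlast⟩ := ih hp
    match l, hl with
    | b :: t, _ =>
      refine ⟨u :: b :: t, by simp, by simpa using hlen, ?_, rfl, ?_⟩
      · rw [List.Chain', List.isChain_cons_cons]
        exact ⟨by rw [show b = w from hh]; exact hΛ, hc⟩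
      · rw [List.getLast_cons]; exact hlast

private lemma lam_nilpotent {n : ℕ} {E : Fin n → Fin n → Prop} {Λ : Matrix (Fin n) (Fin n) ℝ}
    (hacyc : EAcyclic E) (hsupp : SupportedOn E Λ) : Λ ^ n = 0 := by
  ext u v
  by_contra h
  obtain ⟨l, hl, hlen, hc, -, -⟩ := pow_path h
  have hnd : ¬ l.Nodup := fun hn => by
    have := hn.length_le_card
    rw [hlen, Fintype.card_fin] at this; omega
  rw [List.nodup_iff_injective_get] at hnd
  rw [Function.not_injective_iff] at hnd
  obtain ⟨a, b, hab, hne⟩ := hnd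
  have key : ∀ (a b : Fin l.length), (a : ℕ) < (b : ℕ) → l.get a = l.get b → False := by
    intro a b hlt heq
    have ht := chain'_transGen hc hlt b.isLt
    have : Relation.TransGen E (l.get a) (l.get b) := by
      refine Relation.TransGen.mono ?_ _ _ (by convert ht)
      intro x y hxy
      by_contra he; exact hxy (hsupp x y he)
    rw [heq] at this
    exact hacyc _ this
  rcases Nat.lt_or_ge (a : ℕ) (b : ℕ) with h' | h'
  · exact key a b h' hab
  · have h'' : (b : ℕ) < (a : ℕ) := by
      rcases Nat.lt_or_ge (b : ℕ) (a : ℕ) with h'' | h''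
      · exact h''
      · exact absurd (Fin.ext (by omega)) hne
    exact key b a h'' hab.symm

private lemma inv_geom {n : ℕ} {Λ : Matrix (Fin n) (Fin n) ℝ} (hnil : Λ ^ n = 0) :
    (1 - Λ)⁻¹ = ∑ k ∈ Finset.range n, Λ ^ k := by
  apply Matrix.inv_eq_right_inv
  have : (1 - Λ) * ∑ k ∈ Finset.range n, Λ ^ k
      = ∑ k ∈ Finset.range n, (Λ ^ k - Λ ^ (k + 1)) := by
    rw [Finset.mul_sum]
    refine Finset.sum_congr rfl fun k _ => ?_
    rw [sub_mul, one_mul, pow_succ']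
  rw [this, Finset.sum_range_sub', pow_zero, hnil, sub_zero]

private lemma chain_avoid {n : ℕ} {y : Fin n} {R E' : Fin n → Fin n → Prop}
    (hR : ∀ a b, R a b → b ≠ y → E' a b) :
    ∀ l : List (Fin n), l.Chain' R → y ∉ l.tail → l.Chain' E'
  | [], _, _ => List.isChain_nil
  | [_], _, _ => List.isChain_singleton _
  | a :: b :: t, h, hy => by
    rw [List.Chain', List.isChain_cons_cons] at h ⊢
    simp only [List.tail, List.mem_cons, not_or] at hy
    exact ⟨hR _ _ h.1 (Ne.symm hy.1),
      chain_avoid hR (b :: t) h.2 (by simpa using hy.2)⟩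

private lemma tailY {n : ℕ} {y : Fin n} {R E' : Fin n → Fin n → Prop}
    (hR : ∀ a b, R a b → b ≠ y → E' a b) :
    ∀ l : List (Fin n), (hl : l ≠ []) → l.Chain' R →
      (∃ l' : List (Fin n), ∃ hl' : l' ≠ [], l'.Chain' E' ∧ l'.head hl' = y ∧
        l'.getLast hl' = l.getLast hl)
      ∨ l.Chain' E'
  | [], hl, _ => absurd rfl hl
  | [_], _, _ => Or.inr (List.isChain_singleton _)
  | a :: b :: t, _, h => by
    have h' := List.isChain_cons_cons.mp h
    rcases tailY hR (b :: t) (by simp) h'.2 with ⟨l', hl', hc, hh, hlast⟩ | hc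
    · left
      exact ⟨l', hl', hc, hh, by rw [hlast]; exact (List.getLast_cons (by simp)).symm⟩
    · by_cases hb : b = y
      · left
        refine ⟨b :: t, by simp, hc, hb, (List.getLast_cons (by simp)).symm⟩
      · right
        rw [List.Chain', List.isChain_cons_cons]
        exact ⟨hR _ _ h'.1 hb, hc⟩

/-- if there is no trek from `i` to `y` in the graph obtained by
deleting all arrows from `X` to `y`, then for all parameter values the
covariance of `i` with the composite error of the equation of `y` vanishes. -/
theorem no_trek_implies_zero_error_covariance
    {n : ℕ} (E : Fin n → Fin n → Prop) (hacyc : EAcyclic E)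
    (y : Fin n) (X : Finset (Fin n)) (hX : ∀ x ∈ X, E x y) (i : Fin n)
    (hnotrek : ¬ ∃ t : DTrek (fun u v => E u v ∧ ¬ (u ∈ X ∧ v = y)),
      t.src = i ∧ t.dst = y) :
    ∀ Λ Φ : Matrix (Fin n) (Fin n) ℝ,
      SupportedOn E Λ → (∀ u v, u ≠ v → Φ u v = 0) → (∀ u, 0 < Φ u u) →
      errorCov E Λ Φ y X i = 0 := by
  intro Λ Φ hsupp hΦoff hΦpos
  set R : Fin n → Fin n → Prop := fun a b => Λ a b ≠ 0 with hRdef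
  set E' : Fin n → Fin n → Prop := fun u v => E u v ∧ ¬ (u ∈ X ∧ v = y) with hE'def
  have hRE : ∀ a b, R a b → E a b := fun a b h => by
    by_contra he; exact h (hsupp a b he)
  have hRE' : ∀ a b, R a b → b ≠ y → E' a b :=
    fun a b h hb => ⟨hRE a b h, fun hc => hb hc.2⟩
  have hnil : Λ ^ n = 0 := lam_nilpotent hacyc hsupp
  set B : Matrix (Fin n) (Fin n) ℝ := (1 - Λ)⁻¹ with hBdef
  have hBgeom : B = ∑ k ∈ Finset.range n, Λ ^ k := inv_geom hnil
  have hpath : ∀ u v, B u v ≠ 0 → ∃ l : List (Fin n), ∃ hl : l ≠ [],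
      l.Chain' R ∧ l.head hl = u ∧ l.getLast hl = v := by
    intro u v h
    rw [hBgeom, Matrix.sum_apply] at h
    obtain ⟨k, -, hk⟩ := Finset.exists_ne_zero_of_sum_ne_zero h
    obtain ⟨l, hl, -, hc, hh, hlast⟩ := pow_path hk
    exact ⟨l, hl, hc, hh, hlast⟩
  -- From a chain in R ending at i, derive a contradiction via a trek.
  have hcontra : ∀ (l : List (Fin n)) (hl : l ≠ []), l.Chain' R →
      l.getLast hl = i → (l.head hl = y ∨
        ∃ l2 : List (Fin n), ∃ hl2 : l2 ≠ [], l2.Chain' E' ∧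
          l2.head hl2 = l.head hl ∧ l2.getLast hl2 = y) → False := by
    intro l hl hc hlast htop
    rcases tailY hRE' l hl hc with ⟨l', hl', hc', hh', hlast'⟩ | hc'
    · exact hnotrek ⟨⟨l', [y], hl', by simp, hc', List.isChain_singleton _,
        by rw [hh']; rfl⟩, by simpa [DTrek.src, hlast] using hlast', rfl⟩
    · rcases htop with hty | ⟨l2, hl2, hc2, hh2, hlast2⟩
      · exact hnotrek ⟨⟨l, [y], hl, by simp, hc', List.isChain_singleton _,
          by rw [hty]; rfl⟩, hlast, rfl⟩
      · exact hnotrek ⟨⟨l, l2, hl, hl2, hc', hc2, hh2.symm⟩, hlast, hlast2⟩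
  have hByi : B y i = 0 := by
    by_contra h
    obtain ⟨l, hl, hc, hh, hlast⟩ := hpath y i h
    exact hcontra l hl hc hlast (Or.inl hh)
  have hmain : ∀ t p, E p y → p ∉ X → Λ p y ≠ 0 → B t i ≠ 0 → B t p ≠ 0 → False := by
    intro t p hpy hpX hΛpy hti htp
    obtain ⟨l1, h1, hc1, hh1, hl1⟩ := hpath t i hti
    obtain ⟨l2, h2, hc2, hh2, hl2⟩ := hpath t p htp
    -- the chain l2 ++ [y]
    have hcL : (l2 ++ [y]).Chain' R := by
      rw [List.Chain', List.isChain_append]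
      refine ⟨hc2, List.isChain_singleton _, ?_⟩
      intro a ha b hb
      rw [List.getLast?_eq_getLast h2] at ha
      simp only [Option.mem_def, Option.some.injEq] at ha
      simp only [List.head?_cons, Option.mem_def, Option.some.injEq] at hb
      rw [← ha, ← hb, hl2]; exact hΛpy
    have hyl2 : y ∉ l2 := by
      intro hmem
      obtain ⟨m, hm⟩ := List.mem_iff_get.mp hmem
      have hmlt : (m : ℕ) < (l2 ++ [y]).length := by
        simp only [List.length_append, List.length_singleton]; omega
      have hlen : l2.length < (l2 ++ [y]).length := by
        simp only [List.length_append, List.length_singleton]; omega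
      have ht := chain'_transGen hcL (i := (m : ℕ)) (j := l2.length) m.isLt hlen
      have e1 : (l2 ++ [y]).get ⟨(m : ℕ), by omega⟩ = y := by
        have := List.getElem_append_left (bs := [y]) m.isLt (h' := by omega)
        simp only [List.get_eq_getElem]
        rw [this]
        simpa using hm
      have e2 : (l2 ++ [y]).get ⟨l2.length, hlen⟩ = y := by
        simp only [List.get_eq_getElem]
        exact List.getElem_concat_length rfl _
      rw [e1, e2] at ht
      exact hacyc y (Relation.TransGen.mono hRE _ _ ht)
    have hcE' : (l2 ++ [y]).Chain' E' := by
      rw [List.Chain', List.isChain_append]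
      refine ⟨chain_avoid hRE' l2 hc2 (fun hmem => hyl2 (List.mem_of_mem_tail hmem)),
        List.isChain_singleton _, ?_⟩
      intro a ha b hb
      rw [List.getLast?_eq_getLast h2] at ha
      simp only [Option.mem_def, Option.some.injEq] at ha
      simp only [List.head?_cons, Option.mem_def, Option.some.injEq] at hb
      rw [← ha, ← hb, hl2]
      exact ⟨hpy, fun hc => hpX hc.1⟩
    have hheadL : (l2 ++ [y]).head (by simp) = t := by
      rw [List.head_append_of_ne_nil h2]; exact hh2
    have hlastL : (l2 ++ [y]).getLast (by simp) = y := by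
      rw [List.getLast_append]; simp
    exact hcontra l1 h1 hc1 hl1
      (Or.inr ⟨l2 ++ [y], by simp, hcE', by rw [hheadL, hh1], hlastL⟩)
  -- Algebra
  have hBΦ : ∀ j s, ((Bᵀ * Φ) j s) = B s j * Φ s s := by
    intro j s
    rw [Matrix.mul_apply]
    rw [Finset.sum_eq_single s]
    · rw [Matrix.transpose_apply]
    · intro b _ hb
      rw [hΦoff b s hb, mul_zero]
    · intro hs; exact absurd (Finset.mem_univ s) hs
  have hSig : ∀ p, impliedCov Λ Φ i p = ∑ s, B s i * Φ s s * B s p := by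
    intro p
    rw [impliedCov, Matrix.mul_apply]
    exact Finset.sum_congr rfl fun s _ => by rw [hBΦ i s]
  rw [errorCov]
  have h2 : ((((1 - Λ)⁻¹)ᵀ * Φ : Matrix (Fin n) (Fin n) ℝ)) i y = 0 := by
    rw [show (((1 - Λ)⁻¹)ᵀ * Φ : Matrix (Fin n) (Fin n) ℝ) i y = (Bᵀ * Φ) i y from rfl,
      hBΦ i y, hByi, zero_mul]
  rw [h2, add_zero]
  refine Finset.sum_eq_zero fun p hp => ?_
  rw [Finset.mem_filter] at hp
  obtain ⟨-, hpy, hpX⟩ := hp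
  by_cases hΛpy : Λ p y = 0
  · rw [hΛpy, zero_mul]
  · rw [hSig p]
    rw [Finset.sum_eq_zero, mul_zero]
    intro s _
    by_cases hsi : B s i = 0
    · rw [hsi, zero_mul, zero_mul]
    · by_cases hsp : B s p = 0
      · rw [hsp, mul_zero]
      · exact absurd (hmain s p hpy hpX hΛpy hsi hsp) not_false
end

section
/- Let G be a directed acyclic graph on V = Fin n, let y ∈ V, let X ⊆ Pa_G(y), and let i ∈ V. If there exists a trek from i to y in the graph G_{X̄} obtained from G by deleting all arrows from a vertex of X to y, then there exist a matrix Λ supported on the arrows of G and a diagonal matrix Φ with positive diagonal entries such that Σ_{p ∈ Pa_G(y) \ X} Λ[p,y]·Σ[i,p] + ((I − Λ)⁻ᵀΦ)[i,y] ≠ 0, where Σ = (I − Λ)⁻ᵀ Φ (I − Λ)⁻¹. -/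
open Classical Matrix

section MyAux

variable {n : ℕ}

private lemma myChain'_transGen {α : Type*} {R : α → α → Prop} {l : List α}
    (hc : l.Chain' R) : ∀ (j : ℕ) (hj : j < l.length) (i : ℕ) (hij : i < j),
    Relation.TransGen R (l.get ⟨i, lt_trans hij hj⟩) (l.get ⟨j, hj⟩) := by
  intro j
  induction j with
  | zero => omega
  | succ j ih =>
    intro hj i hij
    have hstep : R (l.get ⟨j, by omega⟩) (l.get ⟨j + 1, hj⟩) := by
      have := List.isChain_iff_getElem.mp hc j (by omega)
      convert this using 2 <;> rfl
    rcases Nat.lt_succ_iff_lt_or_eq.mp hij with h | h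
    · exact (ih (by omega) i h).tail hstep
    · subst h; exact Relation.TransGen.single hstep

private lemma myPowChain {R : Fin n → Fin n → Prop} {Λ : Matrix (Fin n) (Fin n) ℝ}
    (hs : ∀ u v, ¬ R u v → Λ u v = 0) :
    ∀ (k : ℕ) (u v : Fin n), (Λ ^ k) u v ≠ 0 →
      ∃ l : List (Fin n), l.Chain' R ∧ l.length = k + 1 ∧
        l.head? = some u ∧ l.getLast? = some v := by
  intro k
  induction k with
  | zero =>
    intro u v h
    simp only [pow_zero, Matrix.one_apply, ne_eq, ite_eq_right_iff, not_forall] at h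
    obtain ⟨rfl, -⟩ := h
    exact ⟨[u], List.isChain_singleton u, by simp, by simp, by simp⟩
  | succ k ih =>
    intro u v h
    rw [pow_succ', Matrix.mul_apply] at h
    obtain ⟨t, -, ht⟩ := Finset.exists_ne_zero_of_sum_ne_zero h
    have hRut : R u t := by
      by_contra hR
      rw [hs u t hR, zero_mul] at ht
      exact ht rfl
    have hpk : (Λ ^ k) t v ≠ 0 := right_ne_zero_of_mul ht
    obtain ⟨l, hc, hlen, hhead, hlast⟩ := ih t v hpk
    match l, hhead with
    | t :: l', rfl =>
      refine ⟨u :: t :: l', List.isChain_cons_cons.mpr ⟨hRut, hc⟩, by simpa using hlen,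
        rfl, by simpa using hlast⟩

private lemma myNilpotent {E : Fin n → Fin n → Prop} (hacyc : EAcyclic E)
    {Λ : Matrix (Fin n) (Fin n) ℝ} (hs : SupportedOn E Λ) : Λ ^ n = 0 := by
  ext u v
  by_contra h
  obtain ⟨l, hc, hlen, -, -⟩ := myPowChain hs n u v h
  have hf : ∃ a b : Fin (n + 1), a ≠ b ∧
      l.get (Fin.cast hlen.symm a) = l.get (Fin.cast hlen.symm b) := by
    apply Fintype.exists_ne_map_eq_of_card_lt
    simp
  obtain ⟨a, b, hab, heq⟩ := hf
  rcases lt_or_gt_of_ne hab with hlt | hlt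
  · have := myChain'_transGen hc (Fin.cast hlen.symm b) (by simp [hlen]; omega) (Fin.cast hlen.symm a) hlt
    rw [show (⟨(Fin.cast hlen.symm a : Fin l.length), _⟩ : Fin l.length) = Fin.cast hlen.symm a
      from rfl, heq] at this
    exact hacyc _ this
  · have := myChain'_transGen hc (Fin.cast hlen.symm a) (by simp [hlen]; omega) (Fin.cast hlen.symm b) hlt
    rw [show (⟨(Fin.cast hlen.symm b : Fin l.length), _⟩ : Fin l.length) = Fin.cast hlen.symm b
      from rfl, heq] at this
    exact hacyc _ this

end MyAux

/-- if a trek from `i` to `y` survives the deletion of all arrows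
from `X` to `y`, then for some parameter values the covariance of `i` with the
composite error of the equation of `y` is nonzero. -/
theorem trek_implies_nonzero_error_covariance
    {n : ℕ} (E : Fin n → Fin n → Prop) (hacyc : EAcyclic E)
    (y : Fin n) (X : Finset (Fin n)) (hX : ∀ x ∈ X, E x y) (i : Fin n)
    (htrek : ∃ t : DTrek (fun u v => E u v ∧ ¬ (u ∈ X ∧ v = y)),
      t.src = i ∧ t.dst = y) :
    ∃ Λ Φ : Matrix (Fin n) (Fin n) ℝ,
      SupportedOn E Λ ∧ (∀ u v, u ≠ v → Φ u v = 0) ∧ (∀ u, 0 < Φ u u) ∧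
      errorCov E Λ Φ y X i ≠ 0 := by
  set E' : Fin n → Fin n → Prop := fun u v => E u v ∧ ¬ (u ∈ X ∧ v = y) with hE'
  obtain ⟨t, hsrc, hdst⟩ := htrek
  set Λ : Matrix (Fin n) (Fin n) ℝ := Matrix.of (fun u v => if E' u v then 1 else 0) with hΛ
  have hsuppE : SupportedOn E Λ := by
    intro u v h
    simp only [hΛ, Matrix.of_apply, hE', ite_eq_right_iff]
    intro hh; exact absurd hh.1 h
  have hΛnonneg : ∀ u v, 0 ≤ Λ u v := by
    intro u v; simp only [hΛ, Matrix.of_apply]; split <;> norm_num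
  have hnil : Λ ^ n = 0 := myNilpotent hacyc hsuppE
  set B : Matrix (Fin n) (Fin n) ℝ := ∑ k ∈ Finset.range n, Λ ^ k with hB
  have hB1 : B * (1 - Λ) = 1 := by
    have h1 := geom_sum_mul Λ n
    rw [hnil, zero_sub] at h1
    rw [← neg_sub Λ 1, mul_neg, h1, neg_neg]
  have hB2 : (1 - Λ) * B = 1 := by
    have h1 := mul_geom_sum Λ n
    rw [hnil, zero_sub] at h1
    rw [← neg_sub Λ 1, neg_mul, h1, neg_neg]
  have hinv : (1 - Λ)⁻¹ = B := Matrix.inv_eq_left_inv hB1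
  have hpownn : ∀ (k : ℕ) (u v : Fin n), 0 ≤ (Λ ^ k) u v := by
    intro k
    induction k with
    | zero =>
      intro u v; rw [pow_zero]
      by_cases h : u = v <;> simp [Matrix.one_apply, h]
    | succ k ih =>
      intro u v; rw [pow_succ, Matrix.mul_apply]
      exact Finset.sum_nonneg fun c _ => mul_nonneg (ih u c) (hΛnonneg c v)
  have hBnn : ∀ u v, 0 ≤ B u v := by
    intro u v
    rw [hB, Matrix.sum_apply]
    exact Finset.sum_nonneg fun k _ => hpownn k u v
  have hBrec : B = 1 + Λ * B := by
    rw [sub_mul, one_mul] at hB2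
    exact sub_eq_iff_eq_add.mp hB2
  have hone_nn : ∀ u v : Fin n, (0:ℝ) ≤ (1 : Matrix (Fin n) (Fin n) ℝ) u v := by
    intro u v; by_cases h : u = v <;> simp [Matrix.one_apply, h]
  have hΛBnn : ∀ u v : Fin n, (0:ℝ) ≤ (Λ * B) u v := by
    intro u v; rw [Matrix.mul_apply]
    exact Finset.sum_nonneg fun c _ => mul_nonneg (hΛnonneg u c) (hBnn c v)
  have hBdiag : ∀ u, 0 < B u u := by
    intro u
    rw [hBrec, Matrix.add_apply, Matrix.one_apply_eq]
    have := hΛBnn u u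
    linarith
  have hBpos : ∀ l : List (Fin n), l.Chain' E' → ∀ u v : Fin n,
      l.head? = some u → l.getLast? = some v → 0 < B u v := by
    intro l
    induction l with
    | nil => intro _ u v h; simp at h
    | cons a l ih =>
      intro hc u v hu hv
      rw [List.head?_cons, Option.some_inj] at hu
      subst hu
      match l with
      | [] =>
        rw [List.getLast?_singleton, Option.some_inj] at hv
        subst hv
        exact hBdiag a
      | b :: l' =>
        have hab : E' a b := (List.isChain_cons_cons.mp hc).1
        have hc' := (List.isChain_cons_cons.mp hc).2
        rw [List.getLast?_cons_cons] at hv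
        have hpos := ih hc' b v (List.head?_cons) hv
        rw [hBrec, Matrix.add_apply]
        have hsum : Λ a b * B b v ≤ (Λ * B) a v := by
          rw [Matrix.mul_apply]
          exact Finset.single_le_sum
            (fun c _ => mul_nonneg (hΛnonneg a c) (hBnn c v)) (Finset.mem_univ b)
        have hΛab : Λ a b = 1 := by rw [hΛ]; simp only [Matrix.of_apply]; rw [if_pos hab]
        rw [hΛab, one_mul] at hsum
        have := hone_nn a v
        linarith
  have hBti : 0 < B t.top i := by
    refine hBpos t.left t.left_chain t.top i ?_ ?_
    · rw [List.head?_eq_head t.left_ne]; rfl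
    · rw [List.getLast?_eq_getLast t.left_ne]; exact congrArg some hsrc
  have hSigma : ∀ a b : Fin n, impliedCov Λ 1 a b = ∑ c, B c a * B c b := by
    intro a b
    rw [impliedCov, hinv, Matrix.mul_one, Matrix.mul_apply]
    simp [Matrix.transpose_apply]
  have hSignn : ∀ a b : Fin n, 0 ≤ impliedCov Λ 1 a b := by
    intro a b
    rw [hSigma]
    exact Finset.sum_nonneg fun c _ => mul_nonneg (hBnn c a) (hBnn c b)
  refine ⟨Λ, 1, hsuppE, fun u v h => Matrix.one_apply_ne h, fun u => by simp, ?_⟩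
  have hterm2 : ((((1 - Λ)⁻¹)ᵀ * (1 : Matrix (Fin n) (Fin n) ℝ) : Matrix (Fin n) (Fin n) ℝ)) i y
      = B y i := by
    rw [hinv, Matrix.mul_one, Matrix.transpose_apply]
  have hSnn : (0:ℝ) ≤ ∑ p ∈ Finset.univ.filter (fun p => E p y ∧ p ∉ X),
      Λ p y * impliedCov Λ 1 i p :=
    Finset.sum_nonneg fun p _ => mul_nonneg (hΛnonneg p y) (hSignn i p)
  -- analyze the right-hand side of the trek via its reversal
  have hrne : t.right.reverse ≠ [] := by simp [t.right_ne]
  have hheadrev : t.right.reverse.head? = some y := by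
    rw [List.head?_reverse, List.getLast?_eq_getLast t.right_ne]; exact congrArg some hdst
  have hlastrev : t.right.reverse.getLast? = some t.top := by
    rw [List.getLast?_reverse, List.head?_eq_head t.right_ne, ← t.top_eq]; rfl
  have hrc : List.Chain' (flip E') t.right.reverse :=
    List.isChain_reverse.mpr t.right_chain
  suffices hpos : 0 < errorCov E Λ 1 y X i by exact ne_of_gt hpos
  rw [errorCov, hterm2]
  match hs : t.right.reverse with
  | [] => exact absurd hs hrne
  | [a] =>
    rw [hs] at hheadrev hlastrev
    simp only [List.head?_cons, List.getLast?_singleton, Option.some_inj] at hheadrev hlastrev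
    have hyi : 0 < B y i := by rw [← hheadrev, hlastrev]; exact hBti
    calc (0:ℝ) < 0 + B y i := by linarith
    _ ≤ _ := by exact add_le_add_left hSnn _
  | a :: b :: s' =>
    rw [hs] at hheadrev hlastrev hrc
    rw [List.head?_cons, Option.some_inj] at hheadrev
    rw [hheadrev] at hrc
    rw [List.getLast?_cons_cons] at hlastrev
    have hby : E' b y := (List.isChain_cons_cons.mp hrc).1
    have hc' : List.Chain' (flip E') (b :: s') := (List.isChain_cons_cons.mp hrc).2
    have hc'' : List.Chain' E' (b :: s').reverse := List.isChain_reverse.mpr hc'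
    have htopb : 0 < B t.top b := by
      refine hBpos (b :: s').reverse hc'' t.top b ?_ ?_
      · rw [List.head?_reverse]; exact hlastrev
      · rw [List.getLast?_reverse]; rfl
    have hbmem : b ∈ Finset.univ.filter (fun p => E p y ∧ p ∉ X) := by
      simp only [Finset.mem_filter, Finset.mem_univ, true_and]
      exact ⟨hby.1, fun hmem => hby.2 ⟨hmem, rfl⟩⟩
    have hSib : 0 < impliedCov Λ 1 i b := by
      rw [hSigma]
      have h1 : B t.top i * B t.top b ≤ ∑ c, B c i * B c b :=
        Finset.single_le_sum
          (fun c _ => mul_nonneg (hBnn c i) (hBnn c b)) (Finset.mem_univ t.top)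
      have h2 : 0 < B t.top i * B t.top b := mul_pos hBti htopb
      linarith
    have hΛby : Λ b y = 1 := by rw [hΛ]; simp only [Matrix.of_apply]; rw [if_pos hby]
    have hS : Λ b y * impliedCov Λ 1 i b ≤ ∑ p ∈ Finset.univ.filter (fun p => E p y ∧ p ∉ X),
        Λ p y * impliedCov Λ 1 i p :=
      Finset.single_le_sum (fun p _ => mul_nonneg (hΛnonneg p y) (hSignn i p)) hbmem
    rw [hΛby, one_mul] at hS
    have := hBnn y i
    linarith
end

section
/- Let G be a directed acyclic graph on V = Fin n, let Λ be any real n×n matrix supported on the arrows of G, let Φ be any diagonal n×n matrix with positive diagonal entries, and let Σ = (I − Λ)⁻ᵀ Φ (I − Λ)⁻¹. Then for all subsets A, B ⊆ V, the rank of the submatrix Σ[A, B] is at most the minimum of |L| + |R| over all pairs of vertex sets (L, R) that t-separate A and B in G. -/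
open Classical Matrix

section Aux

variable {n : ℕ}

/-- Entries of a chain list are related by the transitive closure. -/
lemma transGen_of_chain' {E : Fin n → Fin n → Prop} {l : List (Fin n)}
    (hl : l.Chain' E) (i : ℕ) :
    ∀ (j : ℕ) (hij : i < j) (hj : j < l.length),
      Relation.TransGen E (l.get ⟨i, hij.trans hj⟩) (l.get ⟨j, hj⟩) := by
  intro j
  induction j with
  | zero => intro hij; omega
  | succ k ih =>
    intro hij hj
    have hk1 : k < l.length - 1 := by omega
    have hstep : E (l.get ⟨k, by omega⟩) (l.get ⟨k + 1, by omega⟩) :=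
      List.isChain_iff_getElem.1 hl k (by omega)
    rcases Nat.lt_or_ge i k with h | h
    · exact (ih h (by omega)).tail hstep
    · have : i = k := by omega
      subst this
      exact Relation.TransGen.single hstep

/-- A nonzero entry of a matrix power yields a chain in the supporting
relation, together with bookkeeping information. -/
lemma exists_chain_of_pow_ne_zero {F : Fin n → Fin n → Prop}
    {M : Matrix (Fin n) (Fin n) ℝ} (hM : ∀ u v, ¬ F u v → M u v = 0) :
    ∀ (j : ℕ) (u v : Fin n), (M ^ j) u v ≠ 0 →
      ∃ (l : List (Fin n)) (hne : l ≠ []), l.Chain' F ∧ l.length = j + 1 ∧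
        l.head hne = u ∧ l.getLast hne = v ∧
        ∀ x ∈ l, x = u ∨ ∃ w, F w x := by
  intro j
  induction j with
  | zero =>
    intro u v h
    have huv : u = v := by
      by_contra hne
      rw [pow_zero, Matrix.one_apply_ne hne] at h
      exact h rfl
    subst huv
    exact ⟨[u], by simp, List.isChain_singleton _, by simp, rfl, rfl, by
      intro x hx; left; simpa using hx⟩
  | succ j ih =>
    intro u v h
    rw [pow_succ', Matrix.mul_apply] at h
    obtain ⟨w, -, hw⟩ := Finset.exists_ne_zero_of_sum_ne_zero h
    have h1 : M u w ≠ 0 := fun h0 => hw (by rw [h0]; ring)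
    have h2 : (M ^ j) w v ≠ 0 := fun h0 => hw (by rw [h0]; ring)
    have hF : F u w := by
      by_contra hc
      exact h1 (hM u w hc)
    obtain ⟨l, hne, hchain, hlen, hhead, hlast, hmem⟩ := ih w v h2
    refine ⟨u :: l, by simp, ?_, by simp [hlen], rfl, ?_, ?_⟩
    · apply List.isChain_cons.2
      refine ⟨fun y hy => ?_, hchain⟩
      rw [List.head?_eq_head hne] at hy
      rw [hhead] at hy
      obtain rfl : y = w := by simpa using hy.symm
      exact hF
    · rw [List.getLast_cons hne, hlast]
    · intro x hx
      rcases List.mem_cons.1 hx with rfl | hx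
      · exact Or.inl rfl
      · rcases hmem x hx with rfl | hw'
        · exact Or.inr ⟨u, hF⟩
        · exact Or.inr hw'

/-- Any matrix supported on an acyclic relation on `Fin n` is nilpotent of
order at most `n`. -/
lemma pow_card_eq_zero_of_acyclic {E : Fin n → Fin n → Prop}
    (hacyc : EAcyclic E) {M : Matrix (Fin n) (Fin n) ℝ}
    (hM : SupportedOn E M) : M ^ n = 0 := by
  ext u v
  by_contra h
  obtain ⟨l, hne, hchain, hlen, -, -, -⟩ :=
    exists_chain_of_pow_ne_zero (F := E) hM n u v h
  have hcard : Fintype.card (Fin n) < Fintype.card (Fin l.length) := by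
    simp [hlen]
  obtain ⟨x, y, hxy, hfxy⟩ := Fintype.exists_ne_map_eq_of_card_lt l.get hcard
  have key : ∀ (x y : Fin l.length), x.1 < y.1 → l.get x = l.get y → False := by
    intro x y hlt heq
    have := transGen_of_chain' hchain x.1 y.1 hlt y.2
    rw [show (⟨x.1, _⟩ : Fin l.length) = x from Fin.eta x _,
      show (⟨y.1, _⟩ : Fin l.length) = y from Fin.eta y _, heq] at this
    exact hacyc _ this
  rcases lt_trichotomy x.1 y.1 with hlt | heq | hgt
  · exact key x y hlt hfxy
  · exact hxy (Fin.ext heq)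
  · exact key y x hgt hfxy.symm

/-- Rank of a sum is at most the sum of ranks. -/
lemma matrix_rank_add_le {m p : Type*} [Fintype m] [Fintype p]
    (A B : Matrix m p ℝ) : (A + B).rank ≤ A.rank + B.rank := by
  rw [Matrix.rank, Matrix.rank, Matrix.rank, Matrix.mulVecLin_add]
  have hle : LinearMap.range (A.mulVecLin + B.mulVecLin) ≤
      LinearMap.range A.mulVecLin ⊔ LinearMap.range B.mulVecLin := by
    rintro _ ⟨y, rfl⟩
    exact Submodule.mem_sup.2 ⟨A.mulVecLin y, ⟨y, rfl⟩, B.mulVecLin y, ⟨y, rfl⟩, rfl⟩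
  exact (Submodule.finrank_mono hle).trans
    (Submodule.finrank_add_le_finrank_add_finrank _ _)

/-- Rank of an arbitrary submatrix is at most the rank. -/
lemma matrix_rank_submatrix_le {α β : Type*} [Fintype α] [Fintype β]
    (A : Matrix (Fin n) (Fin n) ℝ) (f : α → Fin n) (g : β → Fin n) :
    (A.submatrix f g).rank ≤ A.rank := by
  have h1 := Matrix.submatrix_mul_equiv (1 : Matrix (Fin n) (Fin n) ℝ) A f
    (Equiv.refl (Fin n)) g
  have h2 := Matrix.submatrix_mul_equiv A (1 : Matrix (Fin n) (Fin n) ℝ) id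
    (Equiv.refl (Fin n)) g
  rw [one_mul] at h1
  rw [mul_one] at h2
  calc (A.submatrix f g).rank
      = ((1 : Matrix (Fin n) (Fin n) ℝ).submatrix f (Equiv.refl (Fin n)) *
          A.submatrix (Equiv.refl (Fin n)) g).rank := by rw [h1]
    _ ≤ (A.submatrix (⇑(Equiv.refl (Fin n))) g).rank := Matrix.rank_mul_le_right _ _
    _ = (A.submatrix id (⇑(Equiv.refl (Fin n))) *
          (1 : Matrix (Fin n) (Fin n) ℝ).submatrix (Equiv.refl (Fin n)) g).rank := by
        rw [h2]; simp
    _ ≤ (A.submatrix id (⇑(Equiv.refl (Fin n)))).rank := Matrix.rank_mul_le_left _ _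
    _ = A.rank := by simp

end Aux

/-- trek separation, inequality direction: for every parameter
assignment, the rank of `Σ[A, B]` is bounded by the size `|L| + |R|` of every
t-separator `(L, R)` of `A` and `B`, i.e. by the minimum such size. -/
theorem rank_le_min_trek_separator
    {n : ℕ} (E : Fin n → Fin n → Prop) (hacyc : EAcyclic E)
    (Λ Φ : Matrix (Fin n) (Fin n) ℝ)
    (hΛ : SupportedOn E Λ) (hdiag : ∀ u v, u ≠ v → Φ u v = 0)
    (hpos : ∀ u, 0 < Φ u u)
    (A B : Finset (Fin n)) :
    ∀ L R : Finset (Fin n), DTSep E L R ↑A ↑B →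
      ((impliedCov Λ Φ).submatrix
          (fun a : {a // a ∈ A} => (a : Fin n))
          (fun b : {b // b ∈ B} => (b : Fin n))).rank ≤ L.card + R.card := by
  intro L R hsep
  classical
  -- diagonal indicator matrices
  set jL : Fin n → ℝ := fun v => if v ∈ L then 1 else 0 with hjL
  set dL : Fin n → ℝ := fun v => if v ∈ L then 0 else 1 with hdL
  set jR : Fin n → ℝ := fun v => if v ∈ R then 1 else 0 with hjR
  set dR : Fin n → ℝ := fun v => if v ∈ R then 0 else 1 with hdR
  set JL : Matrix (Fin n) (Fin n) ℝ := Matrix.diagonal jL with hJL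
  set DL : Matrix (Fin n) (Fin n) ℝ := Matrix.diagonal dL with hDL
  set JR : Matrix (Fin n) (Fin n) ℝ := Matrix.diagonal jR with hJR
  set DR : Matrix (Fin n) (Fin n) ℝ := Matrix.diagonal dR with hDR
  -- Φ is a diagonal matrix
  have hΦ : Φ = Matrix.diagonal (fun i => Φ i i) := by
    ext u v
    by_cases h : u = v
    · subst h; simp
    · rw [Matrix.diagonal_apply_ne _ h, hdiag u v h]
  -- the three transition matrices and their nilpotency
  set ML : Matrix (Fin n) (Fin n) ℝ := Λ * DL with hML
  set MR : Matrix (Fin n) (Fin n) ℝ := Λ * DR with hMR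
  have hMLsupp : ∀ u v, ¬ (E u v ∧ v ∉ L) → ML u v = 0 := by
    intro u v h
    rw [hML, Matrix.mul_diagonal]
    rcases Classical.em (E u v) with he | he
    · rcases Classical.em (v ∈ L) with hv | hv
      · rw [hdL]; simp [hv]
      · exact absurd ⟨he, hv⟩ h
    · rw [hΛ u v he, zero_mul]
  have hMRsupp : ∀ u v, ¬ (E u v ∧ v ∉ R) → MR u v = 0 := by
    intro u v h
    rw [hMR, Matrix.mul_diagonal]
    rcases Classical.em (E u v) with he | he
    · rcases Classical.em (v ∈ R) with hv | hv
      · rw [hdR]; simp [hv]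
      · exact absurd ⟨he, hv⟩ h
    · rw [hΛ u v he, zero_mul]
  have hMLE : SupportedOn E ML := fun u v h => hMLsupp u v (fun hc => h hc.1)
  have hMRE : SupportedOn E MR := fun u v h => hMRsupp u v (fun hc => h hc.1)
  have hΛnil : Λ ^ n = 0 := pow_card_eq_zero_of_acyclic hacyc hΛ
  have hMLnil : ML ^ n = 0 := pow_card_eq_zero_of_acyclic hacyc hMLE
  have hMRnil : MR ^ n = 0 := pow_card_eq_zero_of_acyclic hacyc hMRE
  -- geometric series inverses
  set P : Matrix (Fin n) (Fin n) ℝ := ∑ i ∈ Finset.range n, Λ ^ i with hPdef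
  set PL : Matrix (Fin n) (Fin n) ℝ := ∑ i ∈ Finset.range n, ML ^ i with hPLdef
  set PR : Matrix (Fin n) (Fin n) ℝ := ∑ i ∈ Finset.range n, MR ^ i with hPRdef
  have geom_left : ∀ (M S : Matrix (Fin n) (Fin n) ℝ), M ^ n = 0 →
      S = ∑ i ∈ Finset.range n, M ^ i → (1 - M) * S = 1 := by
    intro M S hnil hS
    rw [hS, mul_neg_geom_sum, hnil, sub_zero]
  have geom_right : ∀ (M S : Matrix (Fin n) (Fin n) ℝ), M ^ n = 0 →
      S = ∑ i ∈ Finset.range n, M ^ i → S * (1 - M) = 1 := by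
    intro M S hnil hS
    have h := geom_sum_mul M n
    rw [hnil, ← hS] at h
    calc S * (1 - M) = -(S * (M - 1)) := by noncomm_ring
      _ = -(0 - 1) := by rw [h]
      _ = 1 := by noncomm_ring
  have hP1 : (1 - Λ) * P = 1 := geom_left Λ P hΛnil hPdef
  have hP2 : P * (1 - Λ) = 1 := geom_right Λ P hΛnil hPdef
  have hPL1 : (1 - ML) * PL = 1 := geom_left ML PL hMLnil hPLdef
  have hPR1 : (1 - MR) * PR = 1 := geom_left MR PR hMRnil hPRdef
  have hinv : (1 - Λ)⁻¹ = P := Matrix.inv_eq_right_inv hP1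
  have hic : impliedCov Λ Φ = Pᵀ * Φ * P := by rw [impliedCov, hinv]
  -- resolvent identities
  have hsplitL : (1 : Matrix (Fin n) (Fin n) ℝ) - ML = (1 - Λ) + Λ * JL := by
    have : DL + JL = 1 := by
      ext u v
      rcases eq_or_ne u v with rfl | huv
      · rw [Matrix.add_apply, hDL, hJL, Matrix.diagonal_apply_eq, Matrix.diagonal_apply_eq,
          Matrix.one_apply_eq, hdL, hjL]
        by_cases h : u ∈ L <;> simp [h]
      · rw [Matrix.add_apply, hDL, hJL, Matrix.diagonal_apply_ne _ huv,
          Matrix.diagonal_apply_ne _ huv, Matrix.one_apply_ne huv, add_zero]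
    rw [hML]
    calc (1 : Matrix (Fin n) (Fin n) ℝ) - Λ * DL
        = 1 - Λ * (DL + JL) + Λ * JL := by noncomm_ring
      _ = (1 - Λ) + Λ * JL := by rw [this, mul_one]
  have hsplitR : (1 : Matrix (Fin n) (Fin n) ℝ) - MR = (1 - Λ) + Λ * JR := by
    have : DR + JR = 1 := by
      ext u v
      rcases eq_or_ne u v with rfl | huv
      · rw [Matrix.add_apply, hDR, hJR, Matrix.diagonal_apply_eq, Matrix.diagonal_apply_eq,
          Matrix.one_apply_eq, hdR, hjR]
        by_cases h : u ∈ R <;> simp [h]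
      · rw [Matrix.add_apply, hDR, hJR, Matrix.diagonal_apply_ne _ huv,
          Matrix.diagonal_apply_ne _ huv, Matrix.one_apply_ne huv, add_zero]
    rw [hMR]
    calc (1 : Matrix (Fin n) (Fin n) ℝ) - Λ * DR
        = 1 - Λ * (DR + JR) + Λ * JR := by noncomm_ring
      _ = (1 - Λ) + Λ * JR := by rw [this, mul_one]
  have key1 : P = PL + P * (Λ * JL) * PL := by
    calc P = P * ((1 - ML) * PL) := by rw [hPL1, mul_one]
      _ = (P * (1 - Λ)) * PL + P * (Λ * JL) * PL := by rw [hsplitL]; noncomm_ring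
      _ = PL + P * (Λ * JL) * PL := by rw [hP2, one_mul]
  have key2 : P = PR + P * (Λ * JR) * PR := by
    calc P = P * ((1 - MR) * PR) := by rw [hPR1, mul_one]
      _ = (P * (1 - Λ)) * PR + P * (Λ * JR) * PR := by rw [hsplitR]; noncomm_ring
      _ = PR + P * (Λ * JR) * PR := by rw [hP2, one_mul]
  have tkey1 : Pᵀ = PLᵀ + PLᵀ * JL * (Λᵀ * Pᵀ) := by
    have hJLt : JLᵀ = JL := by rw [hJL, Matrix.diagonal_transpose]
    calc Pᵀ = (PL + P * (Λ * JL) * PL)ᵀ := by rw [← key1]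
      _ = PLᵀ + PLᵀ * JL * (Λᵀ * Pᵀ) := by
          rw [Matrix.transpose_add, Matrix.transpose_mul, Matrix.transpose_mul,
            Matrix.transpose_mul, hJLt]
          noncomm_ring
  -- the diagonal partition of unity
  have hone : DL * DR + JL + DL * JR = (1 : Matrix (Fin n) (Fin n) ℝ) := by
    rw [hDL, hDR, hJL, hJR, Matrix.diagonal_mul_diagonal, Matrix.diagonal_mul_diagonal]
    ext u v
    rcases eq_or_ne u v with rfl | huv
    · rw [Matrix.add_apply, Matrix.add_apply, Matrix.diagonal_apply_eq,
        Matrix.diagonal_apply_eq, Matrix.diagonal_apply_eq, Matrix.one_apply_eq,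
        hdL, hdR, hjL, hjR]
      by_cases h1 : u ∈ L <;> by_cases h2 : u ∈ R <;> simp [h1, h2]
    · rw [Matrix.add_apply, Matrix.add_apply, Matrix.diagonal_apply_ne _ huv,
        Matrix.diagonal_apply_ne _ huv, Matrix.diagonal_apply_ne _ huv,
        Matrix.one_apply_ne huv, add_zero, add_zero]
  have hcomm : Φ * JL = JL * Φ := by
    rw [hΦ, hJL, Matrix.diagonal_mul_diagonal, Matrix.diagonal_mul_diagonal]
    exact congrArg Matrix.diagonal (funext fun v => mul_comm _ _)
  -- the decomposition Σ = Z + U + W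
  set Z : Matrix (Fin n) (Fin n) ℝ := PLᵀ * (Φ * (DL * DR)) * PR with hZ
  set U : Matrix (Fin n) (Fin n) ℝ :=
    PLᵀ * JL * (Λᵀ * (Pᵀ * (Φ * P)) + Φ * PR) with hU
  set W : Matrix (Fin n) (Fin n) ℝ :=
    (PLᵀ * (Φ * (P * Λ)) + PLᵀ * (Φ * DL)) * JR * PR with hW
  have step2 : PLᵀ * Φ * P = PLᵀ * Φ * PR + PLᵀ * (Φ * (P * Λ)) * JR * PR := by
    calc PLᵀ * Φ * P = PLᵀ * Φ * (PR + P * (Λ * JR) * PR) := by rw [← key2]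
      _ = PLᵀ * Φ * PR + PLᵀ * (Φ * (P * Λ)) * JR * PR := by noncomm_ring
  have step3 : PLᵀ * Φ * PR =
      Z + PLᵀ * JL * (Φ * PR) + PLᵀ * (Φ * DL) * JR * PR := by
    calc PLᵀ * Φ * PR = PLᵀ * (Φ * (DL * DR + JL + DL * JR)) * PR := by
          rw [hone, mul_one]
      _ = PLᵀ * (Φ * (DL * DR)) * PR + PLᵀ * (Φ * JL) * PR
            + PLᵀ * (Φ * DL) * JR * PR := by noncomm_ring
      _ = Z + PLᵀ * JL * (Φ * PR) + PLᵀ * (Φ * DL) * JR * PR := by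
          rw [hcomm, hZ]; noncomm_ring
  have main : Pᵀ * Φ * P = Z + U + W := by
    calc Pᵀ * Φ * P = (PLᵀ + PLᵀ * JL * (Λᵀ * Pᵀ)) * Φ * P := by rw [← tkey1]
      _ = PLᵀ * Φ * P + PLᵀ * JL * (Λᵀ * (Pᵀ * (Φ * P))) := by noncomm_ring
      _ = (PLᵀ * Φ * PR + PLᵀ * (Φ * (P * Λ)) * JR * PR)
            + PLᵀ * JL * (Λᵀ * (Pᵀ * (Φ * P))) := by rw [step2]
      _ = ((Z + PLᵀ * JL * (Φ * PR) + PLᵀ * (Φ * DL) * JR * PR)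
            + PLᵀ * (Φ * (P * Λ)) * JR * PR)
            + PLᵀ * JL * (Λᵀ * (Pᵀ * (Φ * P))) := by rw [step3]
      _ = Z + U + W := by rw [hU, hW]; noncomm_ring
  -- the vanishing of Z on A × B
  have hZzero : ∀ a ∈ A, ∀ b ∈ B, Z a b = 0 := by
    intro a ha b hb
    rw [hZ, hΦ, hDL, hDR, Matrix.diagonal_mul_diagonal, Matrix.diagonal_mul_diagonal]
    rw [Matrix.mul_apply]
    apply Finset.sum_eq_zero
    intro t ht
    rw [Matrix.mul_diagonal, Matrix.transpose_apply]
    by_contra hne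
    have hPLne : PL t a ≠ 0 := fun h0 => hne (by rw [h0]; ring)
    have hwne : Φ t t * (dL t * dR t) ≠ 0 := fun h0 => hne (by rw [h0]; ring)
    have hPRne : PR t b ≠ 0 := fun h0 => hne (by rw [h0]; ring)
    have htL : t ∉ L := by
      intro hc
      apply hwne
      rw [hdL]; simp [hc]
    have htR : t ∉ R := by
      intro hc
      apply hwne
      rw [hdR]; simp [hc]
    -- extract a chain on the left
    rw [hPLdef, Matrix.sum_apply] at hPLne
    obtain ⟨i, -, hi⟩ := Finset.exists_ne_zero_of_sum_ne_zero hPLne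
    obtain ⟨l1, hne1, hchain1, -, hhead1, hlast1, hmem1⟩ :=
      exists_chain_of_pow_ne_zero (F := fun u v => E u v ∧ v ∉ L) hMLsupp i t a hi
    rw [hPRdef, Matrix.sum_apply] at hPRne
    obtain ⟨k, -, hk⟩ := Finset.exists_ne_zero_of_sum_ne_zero hPRne
    obtain ⟨l2, hne2, hchain2, -, hhead2, hlast2, hmem2⟩ :=
      exists_chain_of_pow_ne_zero (F := fun u v => E u v ∧ v ∉ R) hMRsupp k t b hk
    have hc1 : l1.Chain' E := hchain1.imp (fun _ _ h => h.1)
    have hc2 : l2.Chain' E := hchain2.imp (fun _ _ h => h.1)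
    set τ : DTrek E :=
      ⟨l1, l2, hne1, hne2, hc1, hc2, by rw [hhead1, hhead2]⟩ with hτ
    have hsrc : τ.src ∈ (A : Set (Fin n)) := by
      show l1.getLast hne1 ∈ (A : Set (Fin n))
      rw [hlast1]; exact ha
    have hdst : τ.dst ∈ (B : Set (Fin n)) := by
      show l2.getLast hne2 ∈ (B : Set (Fin n))
      rw [hlast2]; exact hb
    rcases hsep τ hsrc hdst with ⟨v, hvL, hvl⟩ | ⟨v, hvR, hvl⟩
    · rcases hmem1 v hvl with rfl | ⟨w, -, hw⟩
      · exact htL hvL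
      · exact hw hvL
    · rcases hmem2 v hvl with rfl | ⟨w, -, hw⟩
      · exact htR hvR
      · exact hw hvR
  -- assemble the rank bound
  set f : {a // a ∈ A} → Fin n := fun a => (a : Fin n) with hf
  set g : {b // b ∈ B} → Fin n := fun b => (b : Fin n) with hg
  have hZsub : Z.submatrix f g = 0 := by
    ext a b
    exact hZzero a a.2 b b.2
  have hrankJL : JL.rank = L.card := by
    rw [hJL, Matrix.rank_diagonal]
    rw [Fintype.card_congr (Equiv.subtypeEquivRight (q := fun v => v ∈ L)
      (fun v => by rw [hjL]; by_cases h : v ∈ L <;> simp [h]))]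
    exact Fintype.card_coe L
  have hrankJR : JR.rank = R.card := by
    rw [hJR, Matrix.rank_diagonal]
    rw [Fintype.card_congr (Equiv.subtypeEquivRight (q := fun v => v ∈ R)
      (fun v => by rw [hjR]; by_cases h : v ∈ R <;> simp [h]))]
    exact Fintype.card_coe R
  have hrankU : U.rank ≤ L.card := by
    rw [hU, mul_assoc]
    calc (PLᵀ * (JL * (Λᵀ * (Pᵀ * (Φ * P)) + Φ * PR))).rank
        ≤ (JL * (Λᵀ * (Pᵀ * (Φ * P)) + Φ * PR)).rank := Matrix.rank_mul_le_right _ _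
      _ ≤ JL.rank := Matrix.rank_mul_le_left _ _
      _ = L.card := hrankJL
  have hrankW : W.rank ≤ R.card := by
    rw [hW]
    calc ((PLᵀ * (Φ * (P * Λ)) + PLᵀ * (Φ * DL)) * JR * PR).rank
        ≤ ((PLᵀ * (Φ * (P * Λ)) + PLᵀ * (Φ * DL)) * JR).rank :=
          Matrix.rank_mul_le_left _ _
      _ ≤ JR.rank := Matrix.rank_mul_le_right _ _
      _ = R.card := hrankJR
  calc ((impliedCov Λ Φ).submatrix f g).rank
      = ((Z + U + W).submatrix f g).rank := by rw [hic, main]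
    _ = (Z.submatrix f g + U.submatrix f g + W.submatrix f g).rank := rfl
    _ = (U.submatrix f g + W.submatrix f g).rank := by rw [hZsub, zero_add]
    _ ≤ (U.submatrix f g).rank + (W.submatrix f g).rank := matrix_rank_add_le _ _
    _ ≤ U.rank + W.rank := add_le_add (matrix_rank_submatrix_le _ _ _)
        (matrix_rank_submatrix_le _ _ _)
    _ ≤ L.card + R.card := add_le_add hrankU hrankW
end

section
/- Let G be a directed acyclic graph on V = Fin n, let Λ be a real n×n matrix supported on the arrows of G, let Φ be a diagonal n×n matrix, and let Σ = (I − Λ)⁻ᵀ Φ (I − Λ)⁻¹. Then for all vertices i, j: Σ[i, j] equals the sum, over all treks π from i to j in G, of Φ[t, t] · Π_{u→v an arrow traversed by π} Λ[u, v], where t is the top of π. (Since G is acyclic there are only finitely many treks from i to j.) -/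
open Classical Matrix

/-- The product of the path coefficients `Λ[u,v]` over the consecutive arrows
of a list of vertices. -/
def pathProd {n : ℕ} (Λ : Matrix (Fin n) (Fin n) ℝ) (l : List (Fin n)) : ℝ :=
  ((l.zip l.tail).map fun p => Λ p.1 p.2).prod

/-- The trek-rule weight of a trek: the error variance of its top times the
product of the path coefficients of all arrows it traverses (with
multiplicity). -/
noncomputable def trekWeight {n : ℕ} {E : Fin n → Fin n → Prop}
    (Λ Φ : Matrix (Fin n) (Fin n) ℝ) (t : DTrek E) : ℝ :=
  Φ t.top t.top * pathProd Λ t.left * pathProd Λ t.right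

namespace TrekAux
variable {n : ℕ}

lemma pathProd_single (Λ : Matrix (Fin n) (Fin n) ℝ) (a : Fin n) : pathProd Λ [a] = 1 := rfl

lemma pathProd_cons_cons (Λ : Matrix (Fin n) (Fin n) ℝ) (a b : Fin n) (l : List (Fin n)) :
    pathProd Λ (a :: b :: l) = Λ a b * pathProd Λ (b :: l) := by
  simp [pathProd]

lemma chain'_of_pathProd_ne_zero {E : Fin n → Fin n → Prop} {Λ : Matrix (Fin n) (Fin n) ℝ}
    (hΛ : SupportedOn E Λ) : ∀ l : List (Fin n), pathProd Λ l ≠ 0 → l.Chain' E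
  | [], _ => List.isChain_nil
  | [a], _ => List.isChain_singleton a
  | a :: b :: l, h => by
    rw [pathProd_cons_cons] at h
    have h1 : Λ a b ≠ 0 := fun hz => h (by rw [hz, zero_mul])
    have hE : E a b := by by_contra hc; exact h1 (hΛ a b hc)
    have htail := chain'_of_pathProd_ne_zero hΛ (b :: l) (fun hz => h (by rw [hz, mul_zero]))
    exact List.isChain_cons_cons.mpr ⟨hE, htail⟩

lemma nodup_of_chain' {E : Fin n → Fin n → Prop} (hacyc : EAcyclic E) {l : List (Fin n)}
    (h : l.Chain' E) : l.Nodup := by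
  have h2 : l.Chain' (Relation.TransGen E) :=
    h.imp (fun a b hab => Relation.TransGen.single hab)
  have h3 : l.Pairwise (Relation.TransGen E) := List.isChain_iff_pairwise.mp h2
  exact h3.imp (fun hab heq => (hacyc _ (heq ▸ hab)).elim)

noncomputable def pathsOfLen : ℕ → Fin n → Fin n → Finset (List (Fin n))
  | 0, t, i => if t = i then {[t]} else ∅
  | (k+1), t, i => Finset.univ.biUnion (fun u => (pathsOfLen k u i).image (fun l => t :: l))

lemma mem_pathsOfLen : ∀ (k : ℕ) (t i : Fin n) (l : List (Fin n)),
    l ∈ pathsOfLen k t i ↔ l.length = k + 1 ∧ l.head? = some t ∧ l.getLast? = some i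
  | 0, t, i, l => by
    simp only [pathsOfLen]
    split_ifs with h
    · subst h
      simp only [Finset.mem_singleton]
      constructor
      · rintro rfl; simp
      · rintro ⟨h1, h2, h3⟩
        obtain ⟨a, rfl⟩ := List.length_eq_one_iff.mp h1
        simp_all
    · simp only [Finset.notMem_empty, false_iff]
      rintro ⟨h1, h2, h3⟩
      obtain ⟨a, rfl⟩ := List.length_eq_one_iff.mp h1
      simp_all
  | (k+1), t, i, l => by
    simp only [pathsOfLen, Finset.mem_biUnion, Finset.mem_image, Finset.mem_univ, true_and]
    constructor
    · rintro ⟨u, m, hm, rfl⟩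
      obtain ⟨h1, h2, h3⟩ := (mem_pathsOfLen k u i m).mp hm
      obtain ⟨c, m', rfl⟩ := List.exists_cons_of_ne_nil (l := m)
        (by intro hnil; rw [hnil] at h1; simp at h1)
      exact ⟨by simp [h1], rfl, by rw [List.getLast?_cons_cons]; exact h3⟩
    · rintro ⟨h1, h2, h3⟩
      obtain ⟨a, m, rfl⟩ := List.exists_cons_of_ne_nil (l := l)
        (by intro hnil; rw [hnil] at h1; simp at h1)
      have ha : a = t := by simpa using h2
      subst ha
      have hm : m ≠ [] := by
        intro hnil; rw [hnil] at h1; simp at h1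
      obtain ⟨c, m', rfl⟩ := List.exists_cons_of_ne_nil hm
      refine ⟨c, c :: m', (mem_pathsOfLen k c i _).mpr ⟨by simpa using h1, rfl, ?_⟩, rfl⟩
      rw [List.getLast?_cons_cons] at h3; exact h3

lemma pow_apply_eq (Λ : Matrix (Fin n) (Fin n) ℝ) : ∀ (k : ℕ) (t i : Fin n),
    (Λ ^ k) t i = ∑ l ∈ pathsOfLen k t i, pathProd Λ l
  | 0, t, i => by
    rw [pow_zero, Matrix.one_apply]
    simp only [pathsOfLen]
    split_ifs with h
    · rw [Finset.sum_singleton, pathProd_single]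
    · rw [Finset.sum_empty]
  | (k+1), t, i => by
    rw [pow_succ', Matrix.mul_apply]
    have hdisj : ((Finset.univ : Finset (Fin n)) : Set (Fin n)).PairwiseDisjoint
        (fun u => (pathsOfLen k u i).image (fun l => t :: l)) := by
      intro u _ v _ huv
      simp only [Function.onFun]
      rw [Finset.disjoint_left]
      rintro x hxu hxv
      obtain ⟨l, hl, rfl⟩ := Finset.mem_image.mp hxu
      obtain ⟨m, hm, hcons⟩ := Finset.mem_image.mp hxv
      have hml : m = l := by injection hcons with hh1 hh2
      subst hml
      have h1 := ((mem_pathsOfLen k u i m).mp hl).2.1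
      have h2 := ((mem_pathsOfLen k v i m).mp hm).2.1
      rw [h1] at h2
      exact huv (by injection h2)
    show _ = ∑ l ∈ Finset.univ.biUnion (fun u => (pathsOfLen k u i).image (fun l => t :: l)),
      pathProd Λ l
    rw [Finset.sum_biUnion hdisj]
    refine Finset.sum_congr rfl (fun u _ => ?_)
    rw [Finset.sum_image (fun x _ y _ h => by injection h)]
    rw [pow_apply_eq Λ k u i, Finset.mul_sum]
    refine Finset.sum_congr rfl (fun l hl => ?_)
    obtain ⟨h1, h2, h3⟩ := (mem_pathsOfLen k u i l).mp hl
    obtain ⟨c, m, rfl⟩ := List.exists_cons_of_ne_nil (l := l)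
      (by intro hnil; rw [hnil] at h1; simp at h1)
    have hc : c = u := by simpa using h2
    subst hc
    rw [pathProd_cons_cons]


lemma pow_card_eq_zero {E : Fin n → Fin n → Prop} {Λ : Matrix (Fin n) (Fin n) ℝ}
    (hacyc : EAcyclic E) (hΛ : SupportedOn E Λ) : Λ ^ n = 0 := by
  ext t i
  rw [pow_apply_eq Λ n t i, Matrix.zero_apply]
  refine Finset.sum_eq_zero (fun l hl => ?_)
  by_contra h
  have hle := (nodup_of_chain' hacyc (chain'_of_pathProd_ne_zero hΛ l h)).length_le_card
  obtain ⟨h1, -, -⟩ := (mem_pathsOfLen n t i l).mp hl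
  rw [h1, Fintype.card_fin] at hle
  omega

lemma inv_one_sub_eq {E : Fin n → Fin n → Prop} {Λ : Matrix (Fin n) (Fin n) ℝ}
    (hacyc : EAcyclic E) (hΛ : SupportedOn E Λ) :
    (1 - Λ)⁻¹ = ∑ k ∈ Finset.range n, Λ ^ k := by
  apply Matrix.inv_eq_right_inv
  have hg := mul_geom_sum Λ n
  rw [pow_card_eq_zero hacyc hΛ, zero_sub] at hg
  have : (1 - Λ) = -(Λ - 1) := (neg_sub Λ 1).symm
  rw [this, neg_mul, hg, neg_neg]

noncomputable def allPaths (t i : Fin n) : Finset (List (Fin n)) :=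
  (Finset.range n).biUnion (fun k => pathsOfLen k t i)

lemma mem_allPaths (t i : Fin n) (l : List (Fin n)) :
    l ∈ allPaths t i ↔
      l ≠ [] ∧ l.length ≤ n ∧ l.head? = some t ∧ l.getLast? = some i := by
  simp only [allPaths, Finset.mem_biUnion, Finset.mem_range, mem_pathsOfLen]
  constructor
  · rintro ⟨k, hk, h1, h2, h3⟩
    exact ⟨by intro hnil; rw [hnil] at h1; simp at h1, by omega, h2, h3⟩
  · rintro ⟨h0, h1, h2, h3⟩
    have : l.length ≠ 0 := by simpa using h0
    exact ⟨l.length - 1, by omega, by omega, h2, h3⟩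

lemma inv_apply_eq {E : Fin n → Fin n → Prop} {Λ : Matrix (Fin n) (Fin n) ℝ}
    (hacyc : EAcyclic E) (hΛ : SupportedOn E Λ) (t i : Fin n) :
    (1 - Λ)⁻¹ t i = ∑ l ∈ allPaths t i, pathProd Λ l := by
  rw [inv_one_sub_eq hacyc hΛ]
  rw [show (∑ k ∈ Finset.range n, Λ ^ k) t i = ∑ k ∈ Finset.range n, (Λ ^ k) t i from
    Matrix.sum_apply t i _ _]
  rw [allPaths, Finset.sum_biUnion]
  · exact Finset.sum_congr rfl (fun k _ => pow_apply_eq Λ k t i)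
  · intro a _ b _ hab
    simp only [Function.onFun]
    rw [Finset.disjoint_left]
    intro x hxa hxb
    have h1 := ((mem_pathsOfLen a t i x).mp hxa).1
    have h2 := ((mem_pathsOfLen b t i x).mp hxb).1
    omega


noncomputable def headVal (Φ : Matrix (Fin n) (Fin n) ℝ) (l : List (Fin n)) : ℝ :=
  l.head?.elim 0 (fun t => Φ t t)

lemma headVal_eq {Φ : Matrix (Fin n) (Fin n) ℝ} {l : List (Fin n)} {t : Fin n}
    (h : l.head? = some t) : headVal Φ l = Φ t t := by
  rw [headVal, h]; rfl

noncomputable def pairSet (E : Fin n → Fin n → Prop) (i j : Fin n) :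
    Finset (List (Fin n) × List (Fin n)) :=
  Finset.univ.biUnion (fun t =>
    ((allPaths t i).filter (fun l => l.Chain' E)) ×ˢ
      ((allPaths t j).filter (fun l => l.Chain' E)))

lemma ext' {E : Fin n → Fin n → Prop} {t₁ t₂ : DTrek E}
    (h1 : t₁.left = t₂.left) (h2 : t₁.right = t₂.right) : t₁ = t₂ := by
  cases t₁; cases t₂
  cases h1; cases h2
  rfl

lemma toPair_mem {E : Fin n → Fin n → Prop} (hacyc : EAcyclic E) {i j : Fin n}
    (a : DTrek E) (ha : a.src = i ∧ a.dst = j) : (a.left, a.right) ∈ pairSet E i j := by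
  refine Finset.mem_biUnion.mpr ⟨a.top, Finset.mem_univ _, Finset.mem_product.mpr ⟨?_, ?_⟩⟩
  · refine Finset.mem_filter.mpr ⟨(mem_allPaths _ _ _).mpr ⟨a.left_ne, ?_, ?_, ?_⟩, a.left_chain⟩
    · simpa [Fintype.card_fin] using (nodup_of_chain' hacyc a.left_chain).length_le_card
    · exact List.head?_eq_head a.left_ne
    · rw [List.getLast?_eq_getLast a.left_ne]; exact congrArg some ha.1
  · refine Finset.mem_filter.mpr ⟨(mem_allPaths _ _ _).mpr ⟨a.right_ne, ?_, ?_, ?_⟩, a.right_chain⟩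
    · simpa [Fintype.card_fin] using (nodup_of_chain' hacyc a.right_chain).length_le_card
    · rw [List.head?_eq_head a.right_ne, ← a.top_eq]; rfl
    · rw [List.getLast?_eq_getLast a.right_ne]; exact congrArg some ha.2

lemma mem_pairSet_spec {E : Fin n → Fin n → Prop} {i j : Fin n}
    {p : List (Fin n) × List (Fin n)} (hp : p ∈ pairSet E i j) :
    p.1 ≠ [] ∧ p.2 ≠ [] ∧ p.1.Chain' E ∧ p.2.Chain' E ∧ p.1.head? = p.2.head? ∧
      p.1.getLast? = some i ∧ p.2.getLast? = some j := by
  obtain ⟨t, -, hmem⟩ := Finset.mem_biUnion.mp hp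
  obtain ⟨h1, h2⟩ := Finset.mem_product.mp hmem
  obtain ⟨hl1, hc1⟩ := Finset.mem_filter.mp h1
  obtain ⟨hl2, hc2⟩ := Finset.mem_filter.mp h2
  obtain ⟨hne1, -, hh1, hg1⟩ := (mem_allPaths _ _ _).mp hl1
  obtain ⟨hne2, -, hh2, hg2⟩ := (mem_allPaths _ _ _).mp hl2
  exact ⟨hne1, hne2, hc1, hc2, by rw [hh1, hh2], hg1, hg2⟩

noncomputable def ofPair {E : Fin n → Fin n → Prop} {i j : Fin n}
    (p : List (Fin n) × List (Fin n)) (hp : p ∈ pairSet E i j) : DTrek E where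
  left := p.1
  right := p.2
  left_ne := (mem_pairSet_spec hp).1
  right_ne := (mem_pairSet_spec hp).2.1
  left_chain := (mem_pairSet_spec hp).2.2.1
  right_chain := (mem_pairSet_spec hp).2.2.2.1
  top_eq := Option.some.inj
    (((List.head?_eq_head (mem_pairSet_spec hp).1).symm.trans
      (mem_pairSet_spec hp).2.2.2.2.1).trans
      (List.head?_eq_head (mem_pairSet_spec hp).2.1))

lemma ofPair_src {E : Fin n → Fin n → Prop} {i j : Fin n}
    (p : List (Fin n) × List (Fin n)) (hp : p ∈ pairSet E i j) :
    (ofPair p hp).src = i ∧ (ofPair p hp).dst = j := by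
  have h1 := (mem_pairSet_spec hp).2.2.2.2.2.1
  have h2 := (mem_pairSet_spec hp).2.2.2.2.2.2
  constructor
  · rw [List.getLast?_eq_getLast (mem_pairSet_spec hp).1] at h1
    exact Option.some.inj h1
  · rw [List.getLast?_eq_getLast (mem_pairSet_spec hp).2.1] at h2
    exact Option.some.inj h2

end TrekAux

/-- trek rule: in an acyclic SEM there are only finitely many
treks from `i` to `j`, and `Σ[i,j]` is the sum of their weights. -/
theorem trek_rule
    {n : ℕ} (E : Fin n → Fin n → Prop) (hacyc : EAcyclic E)
    (Λ Φ : Matrix (Fin n) (Fin n) ℝ)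
    (hΛ : SupportedOn E Λ) (hdiag : ∀ u v, u ≠ v → Φ u v = 0) :
    ∀ i j : Fin n,
      Finite {t : DTrek E // t.src = i ∧ t.dst = j} ∧
      impliedCov Λ Φ i j =
        ∑ᶠ t : {t : DTrek E // t.src = i ∧ t.dst = j}, trekWeight Λ Φ t.1 := by
  intro i j
  classical
  have hfin : Finite {t : DTrek E // t.src = i ∧ t.dst = j} := by
    refine Finite.of_injective
      (fun a => (⟨(a.1.left, a.1.right), TrekAux.toPair_mem hacyc a.1 a.2⟩ :
        {p // p ∈ TrekAux.pairSet E i j})) ?_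
    intro a b hab
    have h := congrArg Subtype.val hab
    exact Subtype.ext (TrekAux.ext' (congrArg Prod.fst h) (congrArg Prod.snd h))
  refine ⟨hfin, ?_⟩
  haveI := Fintype.ofFinite {t : DTrek E // t.src = i ∧ t.dst = j}
  rw [finsum_eq_sum_of_fintype]
  have hstep1 : impliedCov Λ Φ i j = ∑ t, (1 - Λ)⁻¹ t i * Φ t t * (1 - Λ)⁻¹ t j := by
    simp only [impliedCov, Matrix.mul_apply, Matrix.transpose_apply, Finset.sum_mul]
    rw [Finset.sum_comm]
    refine Finset.sum_congr rfl (fun t _ => ?_)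
    rw [Finset.sum_eq_single t]
    · intro s _ hst
      rw [hdiag t s (Ne.symm hst), mul_zero, zero_mul]
    · exact fun h => absurd (Finset.mem_univ t) h
  have hstep2 : ∀ t v, (1 - Λ)⁻¹ t v =
      ∑ l ∈ (TrekAux.allPaths t v).filter (fun l => l.Chain' E), pathProd Λ l := by
    intro t v
    rw [TrekAux.inv_apply_eq hacyc hΛ t v]
    exact (Finset.sum_filter_of_ne
      (fun l _ h => TrekAux.chain'_of_pathProd_ne_zero hΛ l h)).symm
  have hdisj : ((Finset.univ : Finset (Fin n)) : Set (Fin n)).PairwiseDisjoint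
      (fun t => ((TrekAux.allPaths t i).filter (fun l => l.Chain' E)) ×ˢ
        ((TrekAux.allPaths t j).filter (fun l => l.Chain' E))) := by
    intro u _ v _ huv
    simp only [Function.onFun]
    rw [Finset.disjoint_left]
    intro p hpu hpv
    have h1 := ((TrekAux.mem_allPaths u i p.1).mp
      (Finset.mem_filter.mp (Finset.mem_product.mp hpu).1).1).2.2.1
    have h2 := ((TrekAux.mem_allPaths v i p.1).mp
      (Finset.mem_filter.mp (Finset.mem_product.mp hpv).1).1).2.2.1
    rw [h1] at h2
    exact huv (by injection h2)
  have hstep3 : ∑ t, (1 - Λ)⁻¹ t i * Φ t t * (1 - Λ)⁻¹ t j =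
      ∑ p ∈ TrekAux.pairSet E i j,
        TrekAux.headVal Φ p.1 * pathProd Λ p.1 * pathProd Λ p.2 := by
    rw [TrekAux.pairSet, Finset.sum_biUnion hdisj]
    refine Finset.sum_congr rfl (fun t _ => ?_)
    rw [Finset.sum_product, hstep2 t i, hstep2 t j]
    simp_rw [Finset.sum_mul, Finset.mul_sum]
    refine Finset.sum_congr rfl (fun l hl => ?_)
    refine Finset.sum_congr rfl (fun r _ => ?_)
    have hh : l.head? = some t := ((TrekAux.mem_allPaths t i l).mp
      (Finset.mem_filter.mp hl).1).2.2.1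
    rw [TrekAux.headVal_eq hh]
    ring
  rw [hstep1, hstep3]
  rw [← Finset.sum_attach (TrekAux.pairSet E i j)
    (fun p => TrekAux.headVal Φ p.1 * pathProd Λ p.1 * pathProd Λ p.2)]
  refine Finset.sum_nbij'
    (fun p => (⟨TrekAux.ofPair p.1 p.2, TrekAux.ofPair_src p.1 p.2⟩ :
      {t : DTrek E // t.src = i ∧ t.dst = j}))
    (fun a => ⟨(a.1.left, a.1.right), TrekAux.toPair_mem hacyc a.1 a.2⟩)
    (fun _ _ => Finset.mem_univ _) (fun _ _ => Finset.mem_attach _ _)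
    (fun p _ => rfl) (fun a _ => Subtype.ext (TrekAux.ext' rfl rfl)) ?_
  intro p _
  simp only [trekWeight, DTrek.top]
  rw [TrekAux.headVal_eq (List.head?_eq_head (TrekAux.mem_pairSet_spec p.2).1)]
  rfl
end

section
/- Consider the SEM on eight variables ordered (y6, l1, l2, y1, y2, y3, y4, y5) with coefficient matrix Λ whose only nonzero entries are Λ[y6,l1] = γ₁, Λ[y6,l2] = γ₂, Λ[l1,y1] = 1, Λ[l1,y2] = λ₂, Λ[l1,y3] = λ₁₃, Λ[l2,y3] = λ₂₃, Λ[l2,y4] = 1, Λ[l2,y5] = λ₅, and with error covariance matrix Φ symmetric positive definite whose off-diagonal entries are all zero except possibly Φ[y1,y2] = Φ[y2,y1]. Let Σ = (I − Λ)⁻ᵀ Φ (I − Λ)⁻¹ be the implied covariance matrix. Then for every such choice of the parameters γ₁, γ₂, λ₂, λ₁₃, λ₂₃, λ₅ and Φ: Σ[y6,y6]·Σ[y5,y3] − Σ[y5,y6]·Σ[y6,y3] = λ₂₃ · (Σ[y6,y6]·Σ[y5,y4] − Σ[y5,y6]·Σ[y6,y4]). In particular, λ₂₃ equals the ratio of the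 conditional covariances of (y5, y3) and (y5, y4) given y6 whenever the latter is nonzero. -/
set_option maxHeartbeats 1000000


open Matrix


section Aux
variable {α : Type*}
@[simp] lemma c84 (x:α)(u:Fin 7→α): Matrix.vecCons x u (4:Fin 8) = u 3 := rfl
@[simp] lemma c85 (x:α)(u:Fin 7→α): Matrix.vecCons x u (5:Fin 8) = u 4 := rfl
@[simp] lemma c86 (x:α)(u:Fin 7→α): Matrix.vecCons x u (6:Fin 8) = u 5 := rfl
@[simp] lemma c87 (x:α)(u:Fin 7→α): Matrix.vecCons x u (7:Fin 8) = u 6 := rfl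
@[simp] lemma c74 (x:α)(u:Fin 6→α): Matrix.vecCons x u (4:Fin 7) = u 3 := rfl
@[simp] lemma c75 (x:α)(u:Fin 6→α): Matrix.vecCons x u (5:Fin 7) = u 4 := rfl
@[simp] lemma c76 (x:α)(u:Fin 6→α): Matrix.vecCons x u (6:Fin 7) = u 5 := rfl
@[simp] lemma c64 (x:α)(u:Fin 5→α): Matrix.vecCons x u (4:Fin 6) = u 3 := rfl
@[simp] lemma c65 (x:α)(u:Fin 5→α): Matrix.vecCons x u (5:Fin 6) = u 4 := rfl
@[simp] lemma c54 (x:α)(u:Fin 4→α): Matrix.vecCons x u (4:Fin 5) = u 3 := rfl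
end Aux


/-- in the SEM on the eight variables
`(y6, l1, l2, y1, y2, y3, y4, y5)` (indices `0,…,7`) with the coefficient
matrix below and error covariance `Φ` (positive definite, all off-diagonal
entries zero except possibly `Φ[y1,y2] = Φ[y2,y1]`), the implied covariance
matrix `Σ = (I − Λ)⁻ᵀ Φ (I − Λ)⁻¹` satisfies
`Σ[y6,y6]·Σ[y5,y3] − Σ[y5,y6]·Σ[y6,y3] = λ₂₃·(Σ[y6,y6]·Σ[y5,y4] − Σ[y5,y6]·Σ[y6,y4])`;
in particular `λ₂₃` is the ratio of the conditional covariances of `(y5,y3)`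
and `(y5,y4)` given `y6` whenever the latter is nonzero. -/
theorem conditional_instrumental_variable_identity
    (gam1 gam2 lam2 lam13 lam23 lam5 : ℝ)
    (Λ : Matrix (Fin 8) (Fin 8) ℝ)
    (hΛ : Λ = !![0, gam1, gam2, 0, 0,    0,     0, 0;
                 0, 0,    0,    1, lam2, lam13, 0, 0;
                 0, 0,    0,    0, 0,    lam23, 1, lam5;
                 0, 0,    0,    0, 0,    0,     0, 0;
                 0, 0,    0,    0, 0,    0,     0, 0;
                 0, 0,    0,    0, 0,    0,     0, 0;
                 0, 0,    0,    0, 0,    0,     0, 0;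
                 0, 0,    0,    0, 0,    0,     0, 0])
    (Φ : Matrix (Fin 8) (Fin 8) ℝ) (hΦpd : Φ.PosDef)
    (hΦoff : ∀ j k : Fin 8, j ≠ k →
      ¬ ((j = 3 ∧ k = 4) ∨ (j = 4 ∧ k = 3)) → Φ j k = 0) :
    (((((1 - Λ)⁻¹)ᵀ * Φ * (1 - Λ)⁻¹ : Matrix (Fin 8) (Fin 8) ℝ)) 0 0 *
        ((((1 - Λ)⁻¹)ᵀ * Φ * (1 - Λ)⁻¹ : Matrix (Fin 8) (Fin 8) ℝ)) 7 5 -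
      ((((1 - Λ)⁻¹)ᵀ * Φ * (1 - Λ)⁻¹ : Matrix (Fin 8) (Fin 8) ℝ)) 7 0 *
        ((((1 - Λ)⁻¹)ᵀ * Φ * (1 - Λ)⁻¹ : Matrix (Fin 8) (Fin 8) ℝ)) 0 5 =
      lam23 *
        (((((1 - Λ)⁻¹)ᵀ * Φ * (1 - Λ)⁻¹ : Matrix (Fin 8) (Fin 8) ℝ)) 0 0 *
            ((((1 - Λ)⁻¹)ᵀ * Φ * (1 - Λ)⁻¹ : Matrix (Fin 8) (Fin 8) ℝ)) 7 6 -
          ((((1 - Λ)⁻¹)ᵀ * Φ * (1 - Λ)⁻¹ : Matrix (Fin 8) (Fin 8) ℝ)) 7 0 *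
            ((((1 - Λ)⁻¹)ᵀ * Φ * (1 - Λ)⁻¹ : Matrix (Fin 8) (Fin 8) ℝ)) 0 6)) ∧
    (((((1 - Λ)⁻¹)ᵀ * Φ * (1 - Λ)⁻¹ : Matrix (Fin 8) (Fin 8) ℝ)) 7 6 -
        ((((1 - Λ)⁻¹)ᵀ * Φ * (1 - Λ)⁻¹ : Matrix (Fin 8) (Fin 8) ℝ)) 7 0 *
          ((((1 - Λ)⁻¹)ᵀ * Φ * (1 - Λ)⁻¹ : Matrix (Fin 8) (Fin 8) ℝ)) 0 6 /
          ((((1 - Λ)⁻¹)ᵀ * Φ * (1 - Λ)⁻¹ : Matrix (Fin 8) (Fin 8) ℝ)) 0 0 ≠ 0 →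
      lam23 =
        (((((1 - Λ)⁻¹)ᵀ * Φ * (1 - Λ)⁻¹ : Matrix (Fin 8) (Fin 8) ℝ)) 7 5 -
            ((((1 - Λ)⁻¹)ᵀ * Φ * (1 - Λ)⁻¹ : Matrix (Fin 8) (Fin 8) ℝ)) 7 0 *
              ((((1 - Λ)⁻¹)ᵀ * Φ * (1 - Λ)⁻¹ : Matrix (Fin 8) (Fin 8) ℝ)) 0 5 /
              ((((1 - Λ)⁻¹)ᵀ * Φ * (1 - Λ)⁻¹ : Matrix (Fin 8) (Fin 8) ℝ)) 0 0) /
          (((((1 - Λ)⁻¹)ᵀ * Φ * (1 - Λ)⁻¹ : Matrix (Fin 8) (Fin 8) ℝ)) 7 6 -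
            ((((1 - Λ)⁻¹)ᵀ * Φ * (1 - Λ)⁻¹ : Matrix (Fin 8) (Fin 8) ℝ)) 7 0 *
              ((((1 - Λ)⁻¹)ᵀ * Φ * (1 - Λ)⁻¹ : Matrix (Fin 8) (Fin 8) ℝ)) 0 6 /
              ((((1 - Λ)⁻¹)ᵀ * Φ * (1 - Λ)⁻¹ : Matrix (Fin 8) (Fin 8) ℝ)) 0 0)) := by
  have hsym : Φ 4 3 = Φ 3 4 := by
    have := hΦpd.isHermitian.apply 4 3
    simpa using this.symm
  have hΦ : Φ = !![Φ 0 0, 0, 0, 0, 0, 0, 0, 0;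
      0, Φ 1 1, 0, 0, 0, 0, 0, 0;
      0, 0, Φ 2 2, 0, 0, 0, 0, 0;
      0, 0, 0, Φ 3 3, Φ 3 4, 0, 0, 0;
      0, 0, 0, Φ 3 4, Φ 4 4, 0, 0, 0;
      0, 0, 0, 0, 0, Φ 5 5, 0, 0;
      0, 0, 0, 0, 0, 0, Φ 6 6, 0;
      0, 0, 0, 0, 0, 0, 0, Φ 7 7] := by
    ext i j
    fin_cases i <;> fin_cases j <;>
      simp only [Matrix.cons_val', Matrix.cons_val_zero, Matrix.cons_val_one,
        Matrix.head_cons, Matrix.head_fin_const, Matrix.empty_val',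
        Matrix.cons_val_fin_one, Matrix.of_apply, Matrix.cons_val_succ] <;>
      first
        | rfl
        | exact hsym
        | (apply hΦoff <;> decide)
  have h00pos : (0:ℝ) < Φ 0 0 := by
    have hx : (fun k : Fin 8 => if k = 0 then (1:ℝ) else 0) ≠ 0 := by
      intro h
      have := congrFun h 0
      simp at this
    have := hΦpd.dotProduct_mulVec_pos hx
    simpa [dotProduct, Matrix.mulVec, Fin.sum_univ_succ] using this
  have hB : (1 - Λ)⁻¹ =
      !![1, gam1, gam2, gam1, gam1*lam2, gam1*lam13 + gam2*lam23, gam2, gam2*lam5;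
         0, 1, 0, 1, lam2, lam13, 0, 0;
         0, 0, 1, 0, 0, lam23, 1, lam5;
         0, 0, 0, 1, 0, 0, 0, 0;
         0, 0, 0, 0, 1, 0, 0, 0;
         0, 0, 0, 0, 0, 1, 0, 0;
         0, 0, 0, 0, 0, 0, 1, 0;
         0, 0, 0, 0, 0, 0, 0, 1] := by
    have hone : (1 : Matrix (Fin 8) (Fin 8) ℝ) =
        !![1,0,0,0,0,0,0,0; 0,1,0,0,0,0,0,0; 0,0,1,0,0,0,0,0; 0,0,0,1,0,0,0,0;
           0,0,0,0,1,0,0,0; 0,0,0,0,0,1,0,0; 0,0,0,0,0,0,1,0; 0,0,0,0,0,0,0,1] := by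
      ext i j
      fin_cases i <;> fin_cases j <;> rfl
    apply inv_eq_right_inv
    subst hΛ
    rw [hone]
    ext i j
    fin_cases i <;> fin_cases j <;>
      (simp [Matrix.mul_apply, Fin.sum_univ_succ]
       try first | rfl | ring)
  rw [hB, hΦ]
  set d0 := Φ 0 0 with hd0
  set d2 := Φ 2 2 with hd2
  set M := (!![1, gam1, gam2, gam1, gam1*lam2, gam1*lam13 + gam2*lam23, gam2, gam2*lam5;
         0, 1, 0, 1, lam2, lam13, 0, 0;
         0, 0, 1, 0, 0, lam23, 1, lam5;
         0, 0, 0, 1, 0, 0, 0, 0;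
         0, 0, 0, 0, 1, 0, 0, 0;
         0, 0, 0, 0, 0, 1, 0, 0;
         0, 0, 0, 0, 0, 0, 1, 0;
         0, 0, 0, 0, 0, 0, 0, 1]ᵀ *
      !![d0, 0, 0, 0, 0, 0, 0, 0;
      0, Φ 1 1, 0, 0, 0, 0, 0, 0;
      0, 0, d2, 0, 0, 0, 0, 0;
      0, 0, 0, Φ 3 3, Φ 3 4, 0, 0, 0;
      0, 0, 0, Φ 3 4, Φ 4 4, 0, 0, 0;
      0, 0, 0, 0, 0, Φ 5 5, 0, 0;
      0, 0, 0, 0, 0, 0, Φ 6 6, 0;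
      0, 0, 0, 0, 0, 0, 0, Φ 7 7] *
      !![1, gam1, gam2, gam1, gam1*lam2, gam1*lam13 + gam2*lam23, gam2, gam2*lam5;
         0, 1, 0, 1, lam2, lam13, 0, 0;
         0, 0, 1, 0, 0, lam23, 1, lam5;
         0, 0, 0, 1, 0, 0, 0, 0;
         0, 0, 0, 0, 1, 0, 0, 0;
         0, 0, 0, 0, 0, 1, 0, 0;
         0, 0, 0, 0, 0, 0, 1, 0;
         0, 0, 0, 0, 0, 0, 0, 1] : Matrix (Fin 8) (Fin 8) ℝ) with hM
  have v00 : M 0 0 = d0 := by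
    simp [hM, Matrix.mul_apply, Fin.sum_univ_succ]
  have v70 : M 7 0 = gam2 * lam5 * d0 := by
    simp [hM, Matrix.mul_apply, Fin.sum_univ_succ]; try ring
  have v05 : M 0 5 = d0 * (gam1*lam13 + gam2*lam23) := by
    simp [hM, Matrix.mul_apply, Fin.sum_univ_succ]; try ring
  have v06 : M 0 6 = d0 * gam2 := by
    simp [hM, Matrix.mul_apply, Fin.sum_univ_succ]; try ring
  have v75 : M 7 5 = gam2 * lam5 * (gam1*lam13 + gam2*lam23) * d0 + lam5 * lam23 * d2 := by
    simp [hM, Matrix.mul_apply, Fin.sum_univ_succ]; try ring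
  have v76 : M 7 6 = gam2 * gam2 * lam5 * d0 + lam5 * d2 := by
    simp [hM, Matrix.mul_apply, Fin.sum_univ_succ]; try ring
  rw [v00, v70, v05, v06, v75, v76]
  have hd0ne : d0 ≠ 0 := ne_of_gt h00pos
  constructor
  · ring
  · intro hne
    have hden : gam2 * gam2 * lam5 * d0 + lam5 * d2 -
        gam2 * lam5 * d0 * (d0 * gam2) / d0 = lam5 * d2 := by
      field_simp
      ring
    rw [hden] at hne ⊢
    have hnum : gam2 * lam5 * (gam1*lam13 + gam2*lam23) * d0 + lam5 * lam23 * d2 -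
        gam2 * lam5 * d0 * (d0 * (gam1*lam13 + gam2*lam23)) / d0 = lam23 * (lam5 * d2) := by
      field_simp; ring
    rw [hnum]
    rw [mul_div_assoc, div_self hne, mul_one]
end
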